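/- arXiv:1508.00522 — 5 statements merged into one kernel-verified Lean document; each statement's English description precedes it below -/
import Mathlib

section
/- Let M : H(n) → ℝ^m be a real-linear map and let 1 ≤ r. Then M is r-complete if and only if every nonzero Hermitian matrix X in the kernel of M has at least r+1 positive eigenvalues (counted with multiplicity). -/
open Matrix
open scoped ComplexOrder

noncomputable section

def rComplete {n : ℕ} {ι : Type*} [Fintype ι]
    (M : Matrix (Fin n) (Fin n) ℂ →ₗ[ℝ] EuclideanSpace ℝ ι) (r : ℕ) : Prop :=
  ∀ X X' : Matrix (Fin n) (Fin n) ℂ, X.PosSemidef → X.rank ≤ r → X'.PosSemidef →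
    X ≠ X' → M X ≠ M X'

section aux

variable {n : ℕ}

lemma aux_rank_conj {n : ℕ} (U : Matrix.unitaryGroup (Fin n) ℂ)
    (D : Matrix (Fin n) (Fin n) ℂ) :
    ((U : Matrix (Fin n) (Fin n) ℂ) * D * (star U : Matrix (Fin n) (Fin n) ℂ)).rank
      = D.rank := by
  have hU : IsUnit (U : Matrix (Fin n) (Fin n) ℂ).det := by
    apply isUnit_iff_isUnit_det _ |>.1
    exact (Unitary.toUnits U).isUnit
  have hUs : IsUnit (star U : Matrix (Fin n) (Fin n) ℂ).det := by
    apply isUnit_iff_isUnit_det _ |>.1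
    exact (Unitary.toUnits (star U)).isUnit
  rw [Matrix.rank_mul_eq_left_of_isUnit_det _ _ hUs,
    Matrix.rank_mul_eq_right_of_isUnit_det _ _ hU]

lemma aux_max_ne_zero_iff (a : ℝ) : max a 0 ≠ 0 ↔ 0 < a := by
  rcases lt_trichotomy a 0 with h | h | h
  · simp [max_eq_right h.le, h, not_lt_of_gt h]
  · simp [h]
  · simp [max_eq_left h.le, h.ne', h]

end aux

/-- `M` is `r`-complete iff every nonzero Hermitian matrix in its kernel has
at least `r+1` positive eigenvalues (counted with multiplicity). -/
theorem stmt1 {n m r : ℕ} (hr : 1 ≤ r)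
    (M : Matrix (Fin n) (Fin n) ℂ →ₗ[ℝ] EuclideanSpace ℝ (Fin m)) :
    rComplete M r ↔
      ∀ (X : Matrix (Fin n) (Fin n) ℂ) (hX : X.IsHermitian), M X = 0 → X ≠ 0 →
        r + 1 ≤ (Finset.univ.filter fun i => 0 < hX.eigenvalues i).card := by
  constructor
  · -- rComplete → eigenvalue condition
    intro hC X hX hMX hX0
    by_contra hcard
    push_neg at hcard
    have hcard' : (Finset.univ.filter fun i => 0 < hX.eigenvalues i).card ≤ r := by omega
    set U : Matrix (Fin n) (Fin n) ℂ := (hX.eigenvectorUnitary : Matrix (Fin n) (Fin n) ℂ)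
    set lam := hX.eigenvalues
    set Dp : Matrix (Fin n) (Fin n) ℂ :=
      Matrix.diagonal (fun i => ((max (lam i) 0 : ℝ) : ℂ)) with hDp
    set Dm : Matrix (Fin n) (Fin n) ℂ :=
      Matrix.diagonal (fun i => ((max (-lam i) 0 : ℝ) : ℂ)) with hDm
    set Xp := U * Dp * star U with hXp
    set Xm := U * Dm * star U with hXm
    have hsub : X = Xp - Xm := by
      have key : ∀ a : ℝ, (a : ℂ) = ((max a 0 : ℝ) : ℂ) - ((max (-a) 0 : ℝ) : ℂ) := by
        intro a
        rw [← Complex.ofReal_sub]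
        congr 1
        rcases le_or_gt a 0 with h | h
        · simp [max_eq_right h, max_eq_left (neg_nonneg.2 h)]
        · simp [max_eq_left h.le, max_eq_right (neg_nonpos.2 h.le)]
      have hd : Matrix.diagonal (RCLike.ofReal ∘ lam) = Dp - Dm := by
        rw [hDp, hDm, Matrix.diagonal_sub]
        ext i j
        rcases eq_or_ne i j with h | h
        · subst h
          simp only [Matrix.diagonal_apply_eq, Function.comp_apply]
          exact key (lam i)
        · simp [Matrix.diagonal_apply_ne _ h]
      calc X = U * Matrix.diagonal (RCLike.ofReal ∘ lam) * star U := hX.spectral_theorem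
        _ = Xp - Xm := by rw [hd, Matrix.mul_sub, Matrix.sub_mul, hXp, hXm]
    have hXpPSD : Xp.PosSemidef := by
      have hDpPSD : Dp.PosSemidef := Matrix.posSemidef_diagonal_iff.2 fun i =>
        Complex.zero_le_real.2 (le_max_right _ _)
      have := hDpPSD.mul_mul_conjTranspose_same U
      rw [hXp, Matrix.star_eq_conjTranspose]
      exact this
    have hXmPSD : Xm.PosSemidef := by
      have hDmPSD : Dm.PosSemidef := Matrix.posSemidef_diagonal_iff.2 fun i =>
        Complex.zero_le_real.2 (le_max_right _ _)
      have := hDmPSD.mul_mul_conjTranspose_same U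
      rw [hXm, Matrix.star_eq_conjTranspose]
      exact this
    have hrank : Xp.rank ≤ r := by
      rw [hXp, aux_rank_conj hX.eigenvectorUnitary Dp, hDp, Matrix.rank_diagonal]
      calc Fintype.card {i // ((max (lam i) 0 : ℝ) : ℂ) ≠ 0}
          = Fintype.card {i : Fin n // 0 < lam i} := by
            refine Fintype.card_congr (Equiv.subtypeEquivRight fun i => ?_)
            rw [Complex.ofReal_ne_zero, aux_max_ne_zero_iff]
        _ = (Finset.univ.filter fun i => 0 < lam i).card := Fintype.card_subtype _
        _ ≤ r := hcard'
    have hne : Xp ≠ Xm := by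
      intro h
      apply hX0
      rw [hsub, h, sub_self]
    have hMeq : M Xp = M Xm := by
      have : M (Xp - Xm) = 0 := by rw [← hsub]; exact hMX
      rw [map_sub, sub_eq_zero] at this
      exact this
    exact hC Xp Xm hXpPSD hrank hXmPSD hne hMeq
  · -- eigenvalue condition → rComplete
    intro H X X' hX hrank hX' hne hMeq
    set D := X - X' with hD
    have hDH : D.IsHermitian := hX.1.sub hX'.1
    have hD0 : D ≠ 0 := sub_ne_zero.2 hne
    have hMD : M D = 0 := by rw [hD, map_sub, hMeq, sub_self]
    have hp := H D hDH hMD hD0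
    set mu := hDH.eigenvalues
    set U : Matrix (Fin n) (Fin n) ℂ := (hDH.eigenvectorUnitary : Matrix (Fin n) (Fin n) ℂ)
      with hU
    -- the submatrix of eigenvectors with positive eigenvalues
    set S := {i : Fin n // 0 < mu i}
    set B : Matrix (Fin n) S ℂ := U.submatrix id Subtype.val with hB
    have hUDU : star U * D * U = Matrix.diagonal (RCLike.ofReal ∘ mu) :=
      by have h := hDH.conjStarAlgAut_star_eigenvectorUnitary
         rw [Unitary.conjStarAlgAut_star_apply] at h
         exact h
    have hBDB : Bᴴ * D * B = Matrix.diagonal (fun s : S => (mu s.1 : ℂ)) := by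
      ext s t
      have : (Bᴴ * D * B) s t = (Uᴴ * D * U) s.1 t.1 := by
        simp [hB, Matrix.mul_apply, Matrix.conjTranspose_apply, Matrix.submatrix_apply]
      rw [this, ← Matrix.star_eq_conjTranspose, hUDU]
      rcases eq_or_ne s t with h | h
      · subst h; simp [Matrix.diagonal_apply_eq]
      · rw [Matrix.diagonal_apply_ne _ h,
          Matrix.diagonal_apply_ne _ (fun hc => h (Subtype.ext hc))]
    have hBDBpos : (Bᴴ * D * B).PosDef := by
      rw [hBDB]
      exact Matrix.PosDef.diagonal fun s => Complex.zero_lt_real.2 s.2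
    have hBXB : Bᴴ * X * B = Bᴴ * D * B + Bᴴ * X' * B := by
      rw [hD, Matrix.mul_sub, Matrix.sub_mul, sub_add_cancel]
    have hBXBpos : (Bᴴ * X * B).PosDef := by
      rw [hBXB]
      exact hBDBpos.add_posSemidef (hX'.conjTranspose_mul_mul_same B)
    have hcardS : Fintype.card S ≤ r := by
      have h1 : (Bᴴ * X * B).rank = Fintype.card S :=
        Matrix.rank_of_isUnit _ hBXBpos.isUnit
      have h2 : (Bᴴ * X * B).rank ≤ X.rank :=
        le_trans (Matrix.rank_mul_le_left _ _) (Matrix.rank_mul_le_right _ _)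
      omega
    have hcardS' : r + 1 ≤ Fintype.card S := by
      rw [Fintype.card_subtype]
      exact hp
    omega
end
end

section
/- Fix n ≥ 2 and nonzero real numbers x_1 < x_2 < … < x_{2n−3}. Let G be the (5n−6)-tuple of Hermitian matrices consisting of e_0e_0*, …, e_{n−1}e_{n−1}* together with, for each k ∈ {1,…,2n−3}, the normalized rank-one matrices v_k v_k*/‖v_k v_k*‖₂ and v̄_k v̄_k*/‖v̄_k v̄_k*‖₂. Then the measurement M_G : H(n) → ℝ^{5n−6}, X ↦ (tr(G_1 X),…,tr(G_{5n−6} X)), is 1-complete. -/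
open Matrix
open scoped ComplexOrder

noncomputable section

def frobNorm {n : ℕ} (X : Matrix (Fin n) (Fin n) ℂ) : ℝ :=
  Real.sqrt (∑ i, ∑ j, Complex.normSq (X i j))

noncomputable def measOf {n : ℕ} {ι : Type*} [Fintype ι]
    (G : ι → Matrix (Fin n) (Fin n) ℂ) :
    Matrix (Fin n) (Fin n) ℂ →ₗ[ℝ] EuclideanSpace ℝ ι where
  toFun X := WithLp.toLp 2 (fun i => ((G i * X).trace).re)
  map_add' X Y := by
    ext i
    simp [Matrix.mul_add]
  map_smul' r X := by
    ext i
    simp [Matrix.mul_smul, Matrix.trace_smul, Complex.real_smul]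

/-- The vector `v = (1, x e^{iπ/(2n)}, x² e^{2iπ/(2n)}, …, x^{n−1} e^{(n−1)iπ/(2n)})ᵗ ∈ ℂⁿ`. -/
noncomputable def pvec (n : ℕ) (x : ℝ) : Fin n → ℂ := fun j =>
  (x : ℂ) ^ (j : ℕ) *
    Complex.exp (((j : ℕ) : ℂ) * (Real.pi : ℂ) * Complex.I / (2 * (n : ℂ)))

/-! ### Auxiliary lemmas -/

lemma sum_eq_two' {ι : Type*} [Fintype ι] [DecidableEq ι] (g : ι → ℂ) (a b : ι) (hab : a ≠ b)
    (h : ∀ j, j ≠ a → j ≠ b → g j = 0) : ∑ j, g j = g a + g b := by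
  rw [← Finset.sum_pair hab]
  exact (Finset.sum_subset (Finset.subset_univ _) (by
    intro x _ hx
    simp only [Finset.mem_insert, Finset.mem_singleton, not_or] at hx
    exact h x hx.1 hx.2)).symm

lemma double_sum_eq_two {n : ℕ} (g : Fin n → Fin n → ℂ) (a b c d : Fin n)
    (hne : (a, b) ≠ (c, d))
    (h : ∀ p : Fin n × Fin n, p ≠ (a, b) → p ≠ (c, d) → g p.1 p.2 = 0) :
    ∑ j, ∑ l, g j l = g a b + g c d := by
  classical
  have h1 : ∑ j, ∑ l, g j l = ∑ p : Fin n × Fin n, g p.1 p.2 := by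
    rw [← Finset.univ_product_univ, Finset.sum_product]
  rw [h1]
  exact sum_eq_two' (fun p : Fin n × Fin n => g p.1 p.2) (a, b) (c, d) hne h

lemma neg_form (t q₁ q₂ k p q r : ℝ) (htpos : 0 < t) (hq₁ : 0 < q₁) (hq₂ : 0 < q₂)
    (hk : 0 ≤ k) (hp : 0 ≤ p) (hq : 0 ≤ q) (ht4 : 4 * t * q₁ * q₂ = k ^ 2 + 1)
    (hr : r ≤ p * q * k) (hne : p ≠ 0 ∨ q ≠ 0) :
    p ^ 2 * (-(2 * t * q₁)) + q ^ 2 * (-(2 * q₂)) + 2 * r < 0 := by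
  rcases eq_or_lt_of_le hq with hq0 | hq0
  · have hp0 : 0 < p := by
      rcases hne with h | h
      · exact lt_of_le_of_ne hp (Ne.symm h)
      · exact absurd hq0.symm h
    have hqq : q = 0 := hq0.symm
    subst hqq
    have : r ≤ 0 := by nlinarith
    nlinarith
  · have hmul : (p ^ 2 * (-(2 * t * q₁)) + q ^ 2 * (-(2 * q₂)) + 2 * r) * (2 * t * q₁)
        ≤ -(q ^ 2) := by
      have hprod : 4 * t * q₁ * r ≤ 4 * t * q₁ * (p * q * k) :=
        mul_le_mul_of_nonneg_left hr (by positivity)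
      nlinarith [sq_nonneg (2 * t * q₁ * p - k * q)]
    by_contra hcon
    push_neg at hcon
    have h1 : 0 < 2 * t * q₁ := by positivity
    nlinarith

lemma antidiag_vanish {n : ℕ} (hn : 2 ≤ n) (x : Fin (2 * n - 3) → ℝ)
    (hx0 : ∀ k, x k ≠ 0) (hxmono : StrictMono x)
    (F : Fin n → Fin n → ℂ) (hdiag : ∀ j, F j j = 0)
    (heval : ∀ k, ∑ j : Fin n, ∑ l : Fin n, F j l * ((x k : ℂ)) ^ ((j : ℕ) + (l : ℕ)) = 0) :
    ∀ s : ℕ, (∑ j : Fin n, ∑ l : Fin n, if (j : ℕ) + (l : ℕ) = s then F j l else 0) = 0 := by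
  classical
  set c : ℕ → ℂ := fun s =>
    ∑ j : Fin n, ∑ l : Fin n, if (j : ℕ) + (l : ℕ) = s then F j l else 0 with hc
  have hhigh : ∀ s : ℕ, 2 * n - 3 < s → c s = 0 := by
    intro s hs
    apply Finset.sum_eq_zero
    intro j _
    apply Finset.sum_eq_zero
    intro l _
    split_ifs with h
    · have hj := j.isLt
      have hl := l.isLt
      have hjl : (j : ℕ) = l := by omega
      have : j = l := Fin.val_injective hjl
      subst this
      exact hdiag j
    · rfl
  have hc0 : c 0 = 0 := by
    apply Finset.sum_eq_zero
    intro j _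
    apply Finset.sum_eq_zero
    intro l _
    split_ifs with h
    · have hjl : (j : ℕ) = l := by omega
      have : j = l := Fin.val_injective hjl
      subst this
      exact hdiag j
    · rfl
  set P : Polynomial ℂ := ∑ s ∈ Finset.range (2 * n - 2), Polynomial.C (c s) * Polynomial.X ^ s
    with hP
  have hdeg : P.natDegree ≤ 2 * n - 3 := by
    apply Polynomial.natDegree_sum_le_of_forall_le
    intro i hi
    exact (Polynomial.natDegree_C_mul_X_pow_le _ _).trans (by
      simp only [Finset.mem_range] at hi; omega)
  have hevalP : ∀ t : ℂ, P.eval t = ∑ j : Fin n, ∑ l : Fin n, F j l * t ^ ((j : ℕ) + (l : ℕ)) := by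
    intro t
    rw [hP]
    rw [Polynomial.eval_finset_sum]
    simp only [Polynomial.eval_mul, Polynomial.eval_C, Polynomial.eval_pow, Polynomial.eval_X]
    have step : ∀ s ∈ Finset.range (2 * n - 2), c s * t ^ s
        = ∑ j : Fin n, ∑ l : Fin n, (if (j : ℕ) + (l : ℕ) = s then F j l else 0) * t ^ s := by
      intro s _
      rw [hc, Finset.sum_mul]
      exact Finset.sum_congr rfl fun j _ => by rw [Finset.sum_mul]
    rw [Finset.sum_congr rfl step, Finset.sum_comm]
    refine Finset.sum_congr rfl fun j _ => ?_
    rw [Finset.sum_comm]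
    refine Finset.sum_congr rfl fun l _ => ?_
    rcases Nat.lt_or_ge ((j : ℕ) + (l : ℕ)) (2 * n - 2) with hjl | hjl
    · have hmem : (j : ℕ) + (l : ℕ) ∈ Finset.range (2 * n - 2) := Finset.mem_range.mpr hjl
      rw [Finset.sum_eq_single ((j : ℕ) + (l : ℕ))]
      · simp
      · intro b _ hb
        simp [Ne.symm hb]
      · intro h; exact absurd hmem h
    · have hj := j.isLt; have hl := l.isLt
      have hjv : (j : ℕ) = l := by omega
      have hjl2 : j = l := Fin.val_injective hjv
      subst hjl2
      rw [hdiag j]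
      rw [Finset.sum_eq_zero]
      · ring
      · intro b hb
        rw [Finset.mem_range] at hb
        have : ¬ ((j : ℕ) + (j : ℕ) = b) := by omega
        simp [this]
  have hPzero : P = 0 := by
    set T : Finset ℂ := insert (0 : ℂ) (Finset.univ.image fun k => ((x k : ℝ) : ℂ)) with hT
    apply Polynomial.eq_zero_of_natDegree_lt_card_of_eval_eq_zero' P T
    · intro i hi
      rw [hT] at hi
      simp only [Finset.mem_insert, Finset.mem_image, Finset.mem_univ, true_and] at hi
      rcases hi with rfl | ⟨k, rfl⟩
      · rw [hevalP]
        apply Finset.sum_eq_zero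
        intro j _
        apply Finset.sum_eq_zero
        intro l _
        rcases Nat.eq_zero_or_pos ((j : ℕ) + (l : ℕ)) with h | h
        · have hjl : (j : ℕ) = l := by omega
          have : j = l := Fin.val_injective hjl
          subst this
          rw [hdiag j]; ring
        · rw [zero_pow (by omega)]; ring
      · rw [hevalP]; exact heval k
    · have hinj : Function.Injective fun k : Fin (2 * n - 3) => ((x k : ℝ) : ℂ) := by
        intro p q h
        simp only at h
        exact hxmono.injective (by exact_mod_cast h)
      have hcardim : (Finset.univ.image fun k : Fin (2 * n - 3) => ((x k : ℝ) : ℂ)).card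
          = 2 * n - 3 := by
        rw [Finset.card_image_of_injective _ hinj, Finset.card_univ, Fintype.card_fin]
      have h0 : (0 : ℂ) ∉ Finset.univ.image fun k : Fin (2 * n - 3) => ((x k : ℝ) : ℂ) := by
        simp only [Finset.mem_image, Finset.mem_univ, true_and, not_exists]
        intro k h
        exact hx0 k (by exact_mod_cast h)
      rw [hT, Finset.card_insert_of_notMem h0, hcardim]
      omega
  intro s
  rcases Nat.lt_or_ge s (2 * n - 2) with hs | hs
  · have hco : P.coeff s = c s := by
      rw [hP, Polynomial.finset_sum_coeff]
      simp only [Polynomial.coeff_C_mul, Polynomial.coeff_X_pow]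
      rw [Finset.sum_eq_single s]
      · simp
      · intro b _ hb
        simp [Ne.symm hb]
      · intro h; exact absurd (Finset.mem_range.mpr hs) h
    have : c s = 0 := by rw [← hco, hPzero]; simp
    exact this
  · exact hhigh s (by omega)

lemma phase_elim {n : ℕ} (hn : 2 ≤ n) (a b : Fin n) (hab : (a : ℕ) < (b : ℕ)) (hb : (b : ℕ) < n)
    (z : ℂ)
    (h1 : Complex.exp (↑Real.pi * Complex.I / (2 * n)) ^ (b : ℕ)
        * Complex.exp (-(↑Real.pi * Complex.I / (2 * n))) ^ (a : ℕ) * z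
        + Complex.exp (↑Real.pi * Complex.I / (2 * n)) ^ (a : ℕ)
        * Complex.exp (-(↑Real.pi * Complex.I / (2 * n))) ^ (b : ℕ) * (starRingEnd ℂ) z = 0)
    (h2 : Complex.exp (↑Real.pi * Complex.I / (2 * n)) ^ (a : ℕ)
        * Complex.exp (-(↑Real.pi * Complex.I / (2 * n))) ^ (b : ℕ) * z
        + Complex.exp (↑Real.pi * Complex.I / (2 * n)) ^ (b : ℕ)
        * Complex.exp (-(↑Real.pi * Complex.I / (2 * n))) ^ (a : ℕ) * (starRingEnd ℂ) z = 0) :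
    z = 0 := by
  set u : ℂ := ↑Real.pi * Complex.I / (2 * n) with hu
  set lam : ℂ := Complex.exp u ^ (b : ℕ) * Complex.exp (-u) ^ (a : ℕ) with hlam
  set mu : ℂ := Complex.exp u ^ (a : ℕ) * Complex.exp (-u) ^ (b : ℕ) with hmu
  by_contra hz
  have key : (lam ^ 2 - mu ^ 2) * z = 0 := by
    have t1 := congrArg (fun w => lam * w) h1
    have h1' : lam ^ 2 * z + lam * mu * (starRingEnd ℂ) z = 0 := by
      simpa [mul_add, pow_two, mul_assoc, mul_left_comm, mul_comm] using t1
    have t2 := congrArg (fun w => mu * w) h2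
    have h2' : mu ^ 2 * z + lam * mu * (starRingEnd ℂ) z = 0 := by
      simpa [mul_add, pow_two, mul_assoc, mul_left_comm, mul_comm] using t2
    linear_combination h1' - h2'
  have hlm : lam ^ 2 = mu ^ 2 := by
    rcases mul_eq_zero.mp key with h | h
    · exact sub_eq_zero.mp h
    · exact absurd h hz
  have e1 : lam ^ 2 = Complex.exp ((2 * (b : ℕ) : ℕ) * u + (2 * (a : ℕ) : ℕ) * (-u)) := by
    rw [Complex.exp_add, Complex.exp_nat_mul, Complex.exp_nat_mul, hlam]
    ring
  have e2 : mu ^ 2 = Complex.exp ((2 * (a : ℕ) : ℕ) * u + (2 * (b : ℕ) : ℕ) * (-u)) := by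
    rw [Complex.exp_add, Complex.exp_nat_mul, Complex.exp_nat_mul, hmu]
    ring
  rw [e1, e2, Complex.exp_eq_exp_iff_exists_int] at hlm
  obtain ⟨m, hm⟩ := hlm
  have hn0 : (n : ℂ) ≠ 0 := by
    simp only [ne_eq, Nat.cast_eq_zero]
    omega
  have hπ : (Real.pi : ℂ) ≠ 0 := by
    exact_mod_cast Complex.ofReal_ne_zero.mpr Real.pi_ne_zero
  rw [hu] at hm
  field_simp at hm
  have key2 : (((b : ℕ) : ℂ) - ((a : ℕ) : ℂ) - (m : ℂ) * (n : ℂ)) * (4 * (Real.pi : ℂ) * Complex.I) = 0 := by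
    push_cast at hm
    linear_combination ((Real.pi : ℂ) * Complex.I) * hm
  have h4 : (4 * (Real.pi : ℂ) * Complex.I) ≠ 0 := by
    apply mul_ne_zero (mul_ne_zero (by norm_num) hπ) Complex.I_ne_zero
  have hba : ((b : ℕ) : ℂ) - ((a : ℕ) : ℂ) - (m : ℂ) * (n : ℂ) = 0 := by
    rcases mul_eq_zero.mp key2 with h | h
    · exact h
    · exact absurd h h4
  have hbaz : ((b : ℕ) : ℤ) - ((a : ℕ) : ℤ) - m * (n : ℤ) = 0 := by
    exact_mod_cast hba
  have hn0' : (0 : ℤ) < (n : ℤ) := by exact_mod_cast (by omega : 0 < n)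
  have hd1 : (0 : ℤ) < ((b : ℕ) : ℤ) - ((a : ℕ) : ℤ) := by
    have : (a : ℕ) < (b : ℕ) := hab
    omega
  have hd2 : ((b : ℕ) : ℤ) - ((a : ℕ) : ℤ) < (n : ℤ) := by
    have : (b : ℕ) < n := hb
    omega
  rcases le_or_gt 1 m with hm1 | hm1
  · nlinarith
  · have hm0 : m ≤ 0 := by omega
    nlinarith

lemma core_contra {n : ℕ} (X X' : Matrix (Fin n) (Fin n) ℂ)
    (hX : X.PosSemidef) (hrank : X.rank ≤ 1) (hX' : X'.PosSemidef)
    (D : Matrix (Fin n) (Fin n) ℂ) (hD : D = X' - X)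
    (hherm : ∀ j k, (starRingEnd ℂ) (D j k) = D k j)
    (hdiag : ∀ j, D j j = 0)
    (a b c d : Fin n) (hab : (a : ℕ) < b) (hcd : (c : ℕ) < d) (hac : (a : ℕ) < c)
    (hsum : (a : ℕ) + (b : ℕ) = (c : ℕ) + (d : ℕ))
    (hDab : D a b ≠ 0) (hDcd : D c d ≠ 0)
    (hmax : ∀ j k : Fin n, (a : ℕ) + (b : ℕ) < (j : ℕ) + (k : ℕ) → D j k = 0) : False := by
  classical
  have hab' : a ≠ b := fun h => by rw [h] at hab; omega
  have hcd' : c ≠ d := fun h => by rw [h] at hcd; omega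
  set q₁ : ℝ := Complex.normSq (D a b) with hq₁
  set q₂ : ℝ := Complex.normSq (D c d) with hq₂
  have hq₁pos : 0 < q₁ := Complex.normSq_pos.mpr hDab
  have hq₂pos : 0 < q₂ := Complex.normSq_pos.mpr hDcd
  set χ : ℂ := -((starRingEnd ℂ) (D c d)) with hχ
  set v : Fin n → ℂ := fun j => if j = c then 1 else if j = d then χ else 0 with hv
  set κ : ℂ := D a c + χ * D a d with hκ
  set t : ℝ := (Complex.normSq κ + 1) / (4 * q₁ * q₂) with ht
  have htpos : 0 < t := by
    apply div_pos
    · have := Complex.normSq_nonneg κ; linarith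
    · positivity
  set τ : ℂ := -(t : ℂ) * (starRingEnd ℂ) (D a b) with hτ
  set u : Fin n → ℂ := fun j => if j = a then 1 else if j = b then τ else 0 with hu
  have hDbc : D b c = 0 := hmax b c (by omega)
  have hDbd : D b d = 0 := hmax b d (by omega)
  have hDcb : D c b = 0 := hmax c b (by omega)
  have hDdb : D d b = 0 := hmax d b (by omega)
  have hmvu : ∀ j, (D *ᵥ u) j = D j a + τ * D j b := by
    intro j
    show (∑ k, D j k * u k) = _
    rw [sum_eq_two' (fun k => D j k * u k) a b hab' (by
      intro k hka hkb
      simp [hu, hka, hkb])]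
    simp [hu, hab', Ne.symm hab', mul_comm]
  have hmvv : ∀ j, (D *ᵥ v) j = D j c + χ * D j d := by
    intro j
    show (∑ k, D j k * v k) = _
    rw [sum_eq_two' (fun k => D j k * v k) c d hcd' (by
      intro k hkc hkd
      simp [hv, hkc, hkd])]
    simp [hv, hcd', Ne.symm hcd', mul_comm]
  have hcq₁ : (starRingEnd ℂ) (D a b) * D a b = ((q₁ : ℝ) : ℂ) :=
    (Complex.normSq_eq_conj_mul_self).symm
  have hcq₂ : (starRingEnd ℂ) (D c d) * D c d = ((q₂ : ℝ) : ℂ) :=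
    (Complex.normSq_eq_conj_mul_self).symm
  have hconjτ : (starRingEnd ℂ) τ = -(t : ℂ) * D a b := by
    rw [hτ]
    simp [_root_.map_mul, Complex.conj_ofReal]
  have hconjχ : (starRingEnd ℂ) χ = -(D c d) := by
    rw [hχ]
    simp
  have hBuu : star u ⬝ᵥ (D *ᵥ u) = ((-(2 * t * q₁) : ℝ) : ℂ) := by
    show (∑ j, (star u) j * (D *ᵥ u) j) = _
    rw [Finset.sum_congr rfl (fun j _ => by rw [hmvu j])]
    rw [sum_eq_two' (fun j => (star u) j * (D j a + τ * D j b)) a b hab' (by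
      intro j hja hjb
      simp [hu, hja, hjb])]
    have h1 : (star u) a = 1 := by simp [hu]
    have h2 : (star u) b = (starRingEnd ℂ) τ := by simp [hu, hab', Ne.symm hab']
    rw [h1, h2, hdiag a, hdiag b, hconjτ, ← hherm a b]
    have e1 : τ * D a b = -(t : ℂ) * (((starRingEnd ℂ) (D a b)) * D a b) := by rw [hτ]; ring
    rw [one_mul, mul_zero, add_zero, zero_add, e1, hcq₁]
    have e2 : -(t : ℂ) * D a b * (starRingEnd ℂ) (D a b)
        = -(t : ℂ) * (((starRingEnd ℂ) (D a b)) * D a b) := by ring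
    rw [e2, hcq₁]
    push_cast
    ring
  have hBvv : star v ⬝ᵥ (D *ᵥ v) = ((-(2 * q₂) : ℝ) : ℂ) := by
    show (∑ j, (star v) j * (D *ᵥ v) j) = _
    rw [Finset.sum_congr rfl (fun j _ => by rw [hmvv j])]
    rw [sum_eq_two' (fun j => (star v) j * (D j c + χ * D j d)) c d hcd' (by
      intro j hjc hjd
      simp [hv, hjc, hjd])]
    have h1 : (star v) c = 1 := by simp [hv]
    have h2 : (star v) d = (starRingEnd ℂ) χ := by simp [hv, hcd', Ne.symm hcd']
    rw [h1, h2, hdiag c, hdiag d, hconjχ, ← hherm c d]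
    rw [hχ]
    push_cast
    linear_combination (-2 : ℂ) * hcq₂
  have hBuv : star u ⬝ᵥ (D *ᵥ v) = κ := by
    show (∑ j, (star u) j * (D *ᵥ v) j) = _
    rw [Finset.sum_congr rfl (fun j _ => by rw [hmvv j])]
    rw [sum_eq_two' (fun j => (star u) j * (D j c + χ * D j d)) a b hab' (by
      intro j hja hjb
      simp [hu, hja, hjb])]
    have h1 : (star u) a = 1 := by simp [hu]
    have h2 : (star u) b = (starRingEnd ℂ) τ := by simp [hu, hab', Ne.symm hab']
    rw [h1, h2, hDbc, hDbd, hκ]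
    ring
  have hBvu : star v ⬝ᵥ (D *ᵥ u) = (starRingEnd ℂ) κ := by
    show (∑ j, (star v) j * (D *ᵥ u) j) = _
    rw [Finset.sum_congr rfl (fun j _ => by rw [hmvu j])]
    rw [sum_eq_two' (fun j => (star v) j * (D j a + τ * D j b)) c d hcd' (by
      intro j hjc hjd
      simp [hv, hjc, hjd])]
    have h1 : (star v) c = 1 := by simp [hv]
    have h2 : (star v) d = (starRingEnd ℂ) χ := by simp [hv, hcd', Ne.symm hcd']
    rw [h1, h2, hDcb, hDdb, hκ]
    rw [map_add, _root_.map_mul, hherm a c, hherm a d]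
    ring
  set ψ : (Fin 2 → ℂ) →ₗ[ℂ] (Fin n → ℂ) :=
    { toFun := fun cc => cc 0 • u + cc 1 • v
      map_add' := by
        intro p q
        funext j
        simp [add_smul]
        ring
      map_smul' := by
        intro r p
        funext j
        simp [smul_smul]
        ring } with hψ
  have hker : ∃ cc : Fin 2 → ℂ, cc ≠ 0 ∧ X *ᵥ (cc 0 • u + cc 1 • v) = 0 := by
    by_contra hcon
    push_neg at hcon
    have hinj : Function.Injective (X.mulVecLin.comp ψ) := by
      rw [← LinearMap.ker_eq_bot]
      rw [Submodule.eq_bot_iff]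
      intro cc hcc
      by_contra hcc0
      exact absurd (by simpa [hψ, Matrix.mulVecLin] using hcc) (by
        simpa using (hcon cc hcc0))
    have h2 : (2 : ℕ) ≤ X.rank := by
      have hr : LinearMap.range (X.mulVecLin.comp ψ) ≤ LinearMap.range X.mulVecLin :=
        LinearMap.range_comp_le_range _ _
      have := Submodule.finrank_mono hr
      rw [LinearMap.finrank_range_of_inj hinj] at this
      simp only [Module.finrank_fintype_fun_eq_card, Fintype.card_fin] at this
      exact le_trans (le_of_eq rfl) this
    omega
  obtain ⟨cc, hcc0, hXw⟩ := hker
  set α : ℂ := cc 0 with hα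
  set β : ℂ := cc 1 with hβ
  set w : Fin n → ℂ := α • u + β • v with hw
  have hpos : 0 ≤ star w ⬝ᵥ (D *ᵥ w) := by
    have h1 := hX'.dotProduct_mulVec_nonneg w
    have h2 : star w ⬝ᵥ (D *ᵥ w) = star w ⬝ᵥ (X' *ᵥ w) - star w ⬝ᵥ (X *ᵥ w) := by
      rw [hD, Matrix.sub_mulVec, dotProduct_sub]
    rw [h2, hXw, dotProduct_zero, sub_zero]
    exact h1
  have hexp : star w ⬝ᵥ (D *ᵥ w)
      = (starRingEnd ℂ) α * α * ((-(2 * t * q₁) : ℝ) : ℂ)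
      + (starRingEnd ℂ) β * β * ((-(2 * q₂) : ℝ) : ℂ)
      + ((starRingEnd ℂ) α * β * κ + (starRingEnd ℂ) ((starRingEnd ℂ) α * β * κ)) := by
    have hsw : star w = (starRingEnd ℂ) α • star u + (starRingEnd ℂ) β • star v := by
      rw [hw]
      funext j
      simp [star_add, star_smul]
    have hmv : D *ᵥ w = α • (D *ᵥ u) + β • (D *ᵥ v) := by
      rw [hw, Matrix.mulVec_add, Matrix.mulVec_smul, Matrix.mulVec_smul]
    rw [hsw, hmv]
    simp only [add_dotProduct, dotProduct_add, smul_dotProduct, dotProduct_smul, smul_eq_mul]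
    rw [hBuu, hBvv, hBuv, hBvu]
    rw [_root_.map_mul, _root_.map_mul, Complex.conj_conj]
    ring
  have hre : 0 ≤ (star w ⬝ᵥ (D *ᵥ w)).re := by
    have := hpos
    rw [Complex.le_def] at this
    simpa using this.1
  rw [hexp] at hre
  have hα2 : (starRingEnd ℂ) α * α = ((Complex.normSq α : ℝ) : ℂ) :=
    (Complex.normSq_eq_conj_mul_self).symm
  have hβ2 : (starRingEnd ℂ) β * β = ((Complex.normSq β : ℝ) : ℂ) :=
    (Complex.normSq_eq_conj_mul_self).symm
  rw [hα2, hβ2] at hre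
  set γ : ℂ := (starRingEnd ℂ) α * β * κ with hγ
  have hrev : (((Complex.normSq α : ℝ) : ℂ) * ((-(2 * t * q₁) : ℝ) : ℂ)
      + ((Complex.normSq β : ℝ) : ℂ) * ((-(2 * q₂) : ℝ) : ℂ)
      + (γ + (starRingEnd ℂ) γ)).re
      = Complex.normSq α * (-(2 * t * q₁)) + Complex.normSq β * (-(2 * q₂)) + 2 * γ.re := by
    simp [Complex.add_re, Complex.mul_re, Complex.conj_re]
    ring
  rw [hrev] at hre
  have hγbound : γ.re ≤ ‖α‖ * ‖β‖ * ‖κ‖ := by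
    calc γ.re ≤ ‖γ‖ := Complex.re_le_norm γ
    _ = ‖α‖ * ‖β‖ * ‖κ‖ := by
        rw [hγ, norm_mul, norm_mul, Complex.norm_conj]
  set p : ℝ := ‖α‖ with hp
  set q : ℝ := ‖β‖ with hq
  set k : ℝ := ‖κ‖ with hk
  have hp2 : Complex.normSq α = p ^ 2 := (Complex.sq_norm α).symm
  have hq2 : Complex.normSq β = q ^ 2 := (Complex.sq_norm β).symm
  have hk2 : Complex.normSq κ = k ^ 2 := (Complex.sq_norm κ).symm
  rw [hp2, hq2] at hre
  have hppos : 0 ≤ p := norm_nonneg α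
  have hqpos : 0 ≤ q := norm_nonneg β
  have hkpos : 0 ≤ k := norm_nonneg κ
  have ht4 : 4 * t * q₁ * q₂ = k ^ 2 + 1 := by
    rw [ht, hk2.symm]
    field_simp
  have hne : p ≠ 0 ∨ q ≠ 0 := by
    have : α ≠ 0 ∨ β ≠ 0 := by
      by_contra hcon
      push_neg at hcon
      apply hcc0
      funext i
      fin_cases i
      · exact hcon.1
      · exact hcon.2
    rcases this with h | h
    · exact Or.inl (by simpa [hp] using norm_ne_zero_iff.mpr h)
    · exact Or.inr (by simpa [hq] using norm_ne_zero_iff.mpr h)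
  have hfinal := neg_form t q₁ q₂ k p q γ.re htpos hq₁pos hq₂pos hkpos hppos hqpos ht4
    hγbound hne
  linarith

lemma trace_std {n : ℕ} (i : Fin n) (X : Matrix (Fin n) (Fin n) ℂ) :
    (Matrix.single i i (1 : ℂ) * X).trace = X i i := by
  classical
  rw [Matrix.trace]
  rw [Finset.sum_eq_single i]
  · simp [Matrix.diag, Matrix.mul_apply, Matrix.single]
  · intro j _ hj
    simp [Matrix.diag, Matrix.mul_apply, Matrix.single, Ne.symm hj]
  · simp

lemma trace_vmv {n : ℕ} (y : Fin n → ℂ) (X : Matrix (Fin n) (Fin n) ℂ) :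
    (Matrix.vecMulVec y (star y) * X).trace
      = ∑ a, ∑ b, y a * (starRingEnd ℂ) (y b) * X b a := by
  rw [Matrix.trace]
  refine Finset.sum_congr rfl fun a _ => ?_
  simp [Matrix.diag, Matrix.mul_apply, Matrix.vecMulVec_apply, mul_assoc]

lemma herm_quad_real {n : ℕ} (M : Matrix (Fin n) (Fin n) ℂ)
    (hM : ∀ j k, (starRingEnd ℂ) (M j k) = M k j) (y : Fin n → ℂ) :
    (∑ a, ∑ b, y a * (starRingEnd ℂ) (y b) * M b a).im = 0 := by
  have hconj : (starRingEnd ℂ) (∑ a, ∑ b, y a * (starRingEnd ℂ) (y b) * M b a)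
      = ∑ a, ∑ b, y a * (starRingEnd ℂ) (y b) * M b a := by
    rw [map_sum]
    rw [Finset.sum_comm]
    refine Finset.sum_congr rfl fun a _ => ?_
    rw [map_sum]
    refine Finset.sum_congr rfl fun b _ => ?_
    rw [_root_.map_mul, _root_.map_mul, Complex.conj_conj, hM b a]
    ring
  have := congrArg Complex.im hconj
  simp only [Complex.conj_im] at this
  linarith

lemma frob_pos {n : ℕ} (hn : 0 < n) (y : Fin n → ℂ) (hy : y ⟨0, hn⟩ ≠ 0) :
    0 < frobNorm (Matrix.vecMulVec y (star y)) := by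
  rw [frobNorm]
  apply Real.sqrt_pos.mpr
  apply Finset.sum_pos'
  · intro i _
    apply Finset.sum_nonneg
    intro j _
    exact Complex.normSq_nonneg _
  · refine ⟨⟨0, hn⟩, Finset.mem_univ _, ?_⟩
    apply Finset.sum_pos'
    · intro j _
      exact Complex.normSq_nonneg _
    · refine ⟨⟨0, hn⟩, Finset.mem_univ _, ?_⟩
      simp only [Matrix.vecMulVec_apply, Pi.star_apply]
      apply Complex.normSq_pos.mpr
      exact mul_ne_zero hy (star_ne_zero.mpr hy)

lemma pvec_eq {n : ℕ} (t : ℝ) (j : Fin n) :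
    pvec n t j
    = (t : ℂ) ^ (j : ℕ) * Complex.exp ((Real.pi : ℂ) * Complex.I / (2 * n)) ^ (j : ℕ) := by
  rw [pvec, ← Complex.exp_nat_mul]
  congr 2
  ring

lemma conj_exp_u {n : ℕ} :
    (starRingEnd ℂ) (Complex.exp ((Real.pi : ℂ) * Complex.I / (2 * (n : ℂ))))
      = Complex.exp (-((Real.pi : ℂ) * Complex.I / (2 * (n : ℂ)))) := by
  rw [← Complex.exp_conj]
  congr 1
  rw [map_div₀]
  rw [_root_.map_mul, _root_.map_mul]
  simp only [Complex.conj_I, Complex.conj_ofReal, Complex.conj_natCast, map_ofNat]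
  ring

/-- the measurement built from `e_i e_i*` (`i = 0,…,n−1`) and the normalized
rank-one matrices `v_k v_k*/‖v_k v_k*‖₂`, `v̄_k v̄_k*/‖v̄_k v̄_k*‖₂` (`k = 1,…,2n−3`)
is `1`-complete, with `5n−6` outcomes. -/
theorem stmt2 {n : ℕ} (hn : 2 ≤ n) (x : Fin (2 * n - 3) → ℝ)
    (hx0 : ∀ k, x k ≠ 0) (hxmono : StrictMono x) :
    rComplete (measOf (fun idx : Fin n ⊕ Fin (2 * n - 3) × Bool =>
      match idx with
      | Sum.inl i => Matrix.single i i (1 : ℂ)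
      | Sum.inr (k, false) =>
          (frobNorm (vecMulVec (pvec n (x k)) (star (pvec n (x k)))))⁻¹ •
            vecMulVec (pvec n (x k)) (star (pvec n (x k)))
      | Sum.inr (k, true) =>
          (frobNorm (vecMulVec (star (pvec n (x k))) (star (star (pvec n (x k))))))⁻¹ •
            vecMulVec (star (pvec n (x k))) (star (star (pvec n (x k)))))) 1 ∧
    Fintype.card (Fin n ⊕ Fin (2 * n - 3) × Bool) = 5 * n - 6 := by
  constructor
  · intro X X' hX hrank hX' hne hMeq
    classical
    exfalso
    have hn0 : 0 < n := by omega
    set D : Matrix (Fin n) (Fin n) ℂ := X' - X with hD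
    have hDne : D ≠ 0 := sub_ne_zero.mpr (Ne.symm hne)
    have hXherm : ∀ j k, (starRingEnd ℂ) (X j k) = X k j := fun j k => hX.1.apply k j
    have hX'herm : ∀ j k, (starRingEnd ℂ) (X' j k) = X' k j := fun j k => hX'.1.apply k j
    have hherm : ∀ j k, (starRingEnd ℂ) (D j k) = D k j := by
      intro j k
      rw [hD]
      simp only [Matrix.sub_apply, map_sub, hXherm, hX'herm]
    -- diagonal vanishing
    have hdiagD : ∀ j, D j j = 0 := by
      intro j
      have h := congrFun (congrArg WithLp.ofLp hMeq) (Sum.inl j)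
      have h' : ((Matrix.single j j (1 : ℂ) * X).trace).re
          = ((Matrix.single j j (1 : ℂ) * X').trace).re := h
      rw [trace_std, trace_std] at h'
      have hXim : (X j j).im = 0 := by
        have := hXherm j j
        have := congrArg Complex.im this
        simp only [Complex.conj_im] at this
        linarith
      have hX'im : (X' j j).im = 0 := by
        have := hX'herm j j
        have := congrArg Complex.im this
        simp only [Complex.conj_im] at this
        linarith
      rw [hD]
      simp only [Matrix.sub_apply]
      apply Complex.ext
      · simp [h']
      · simp [hXim, hX'im]
    -- quadratic conditions
    have hTcond : ∀ (y : Fin n → ℂ), 0 < frobNorm (Matrix.vecMulVec y (star y)) →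
        (((((frobNorm (vecMulVec y (star y)))⁻¹ • vecMulVec y (star y)) * X).trace).re
          = ((((frobNorm (vecMulVec y (star y)))⁻¹ • vecMulVec y (star y)) * X').trace).re) →
        ∑ a, ∑ b, y a * (starRingEnd ℂ) (y b) * D b a = 0 := by
      intro y hfp h
      have hexp : ∀ Z : Matrix (Fin n) (Fin n) ℂ,
          ((((frobNorm (vecMulVec y (star y)))⁻¹ • vecMulVec y (star y)) * Z).trace)
          = (frobNorm (vecMulVec y (star y)))⁻¹ •
              ((vecMulVec y (star y) * Z).trace) := by
        intro Z
        rw [Matrix.smul_mul, Matrix.trace_smul]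
      rw [hexp X, hexp X'] at h
      have hre : ∀ Z : Matrix (Fin n) (Fin n) ℂ,
          ((frobNorm (vecMulVec y (star y)))⁻¹ • ((vecMulVec y (star y) * Z).trace)).re
          = (frobNorm (vecMulVec y (star y)))⁻¹ * ((vecMulVec y (star y) * Z).trace).re := by
        intro Z
        rw [Complex.real_smul, Complex.mul_re]
        simp
      rw [hre X, hre X'] at h
      have hcne : (frobNorm (vecMulVec y (star y)))⁻¹ ≠ 0 := by
        exact inv_ne_zero (ne_of_gt hfp)
      have hreq : ((vecMulVec y (star y) * X).trace).re
          = ((vecMulVec y (star y) * X').trace).re := by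
        exact mul_left_cancel₀ hcne h
      rw [trace_vmv, trace_vmv] at hreq
      have himX := herm_quad_real X hXherm y
      have himX' := herm_quad_real X' hX'herm y
      have heq : (∑ a, ∑ b, y a * (starRingEnd ℂ) (y b) * X b a)
          = (∑ a, ∑ b, y a * (starRingEnd ℂ) (y b) * X' b a) := by
        apply Complex.ext
        · exact hreq
        · rw [himX, himX']
      have : ∑ a, ∑ b, y a * (starRingEnd ℂ) (y b) * D b a
          = (∑ a, ∑ b, y a * (starRingEnd ℂ) (y b) * X' b a)
          - (∑ a, ∑ b, y a * (starRingEnd ℂ) (y b) * X b a) := by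
        rw [← Finset.sum_sub_distrib]
        refine Finset.sum_congr rfl fun a _ => ?_
        rw [← Finset.sum_sub_distrib]
        refine Finset.sum_congr rfl fun b _ => ?_
        rw [hD]
        simp only [Matrix.sub_apply]
        ring
      rw [this, heq, sub_self]
    -- the two families of conditions
    have hv0 : ∀ k : Fin (2 * n - 3), pvec n (x k) ⟨0, hn0⟩ ≠ 0 := by
      intro k
      rw [pvec]
      simp [Complex.exp_ne_zero]
    have hTfalse : ∀ k, ∑ a, ∑ b,
        (pvec n (x k)) a * (starRingEnd ℂ) ((pvec n (x k)) b) * D b a = 0 := by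
      intro k
      apply hTcond (pvec n (x k)) (frob_pos hn0 _ (hv0 k))
      exact congrFun (congrArg WithLp.ofLp hMeq) (Sum.inr (k, false))
    have hTtrue : ∀ k, ∑ a, ∑ b,
        (star (pvec n (x k))) a * (starRingEnd ℂ) ((star (pvec n (x k))) b) * D b a = 0 := by
      intro k
      apply hTcond (star (pvec n (x k))) (frob_pos hn0 _ (by
        simp only [Pi.star_apply]
        exact star_ne_zero.mpr (hv0 k)))
      exact congrFun (congrArg WithLp.ofLp hMeq) (Sum.inr (k, true))
    -- phase notation
    have hconj_pvec : ∀ (t : ℝ) (j : Fin n), (starRingEnd ℂ) (pvec n t j)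
        = (t : ℂ) ^ (j : ℕ)
          * Complex.exp (-((Real.pi : ℂ) * Complex.I / (2 * (n : ℂ)))) ^ (j : ℕ) := by
      intro t j
      rw [pvec_eq, _root_.map_mul, map_pow, map_pow, conj_exp_u]
      congr 2
      exact Complex.conj_ofReal t
    -- convert to polynomial-evaluation form
    have heval_false : ∀ k, ∑ j : Fin n, ∑ l : Fin n,
        (Complex.exp (-((Real.pi : ℂ) * Complex.I / (2 * (n : ℂ)))) ^ (j : ℕ)
          * Complex.exp ((Real.pi : ℂ) * Complex.I / (2 * (n : ℂ))) ^ (l : ℕ) * D j l)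
          * ((x k : ℝ) : ℂ) ^ ((j : ℕ) + (l : ℕ)) = 0 := by
      intro k
      have step : (∑ j : Fin n, ∑ l : Fin n,
          (Complex.exp (-((Real.pi : ℂ) * Complex.I / (2 * (n : ℂ)))) ^ (j : ℕ)
            * Complex.exp ((Real.pi : ℂ) * Complex.I / (2 * (n : ℂ))) ^ (l : ℕ) * D j l)
            * ((x k : ℝ) : ℂ) ^ ((j : ℕ) + (l : ℕ)))
          = ∑ a, ∑ b, (pvec n (x k)) a * (starRingEnd ℂ) ((pvec n (x k)) b) * D b a := by
        rw [Finset.sum_comm]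
        refine Finset.sum_congr rfl fun a _ => ?_
        refine Finset.sum_congr rfl fun b _ => ?_
        rw [pvec_eq, hconj_pvec, pow_add]
        ring
      rw [step]
      exact hTfalse k
    have heval_true : ∀ k, ∑ j : Fin n, ∑ l : Fin n,
        (Complex.exp ((Real.pi : ℂ) * Complex.I / (2 * (n : ℂ))) ^ (j : ℕ)
          * Complex.exp (-((Real.pi : ℂ) * Complex.I / (2 * (n : ℂ)))) ^ (l : ℕ) * D j l)
          * ((x k : ℝ) : ℂ) ^ ((j : ℕ) + (l : ℕ)) = 0 := by
      intro k
      have step : (∑ j : Fin n, ∑ l : Fin n,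
          (Complex.exp ((Real.pi : ℂ) * Complex.I / (2 * (n : ℂ))) ^ (j : ℕ)
            * Complex.exp (-((Real.pi : ℂ) * Complex.I / (2 * (n : ℂ)))) ^ (l : ℕ) * D j l)
            * ((x k : ℝ) : ℂ) ^ ((j : ℕ) + (l : ℕ)))
          = ∑ a, ∑ b, (star (pvec n (x k))) a
              * (starRingEnd ℂ) ((star (pvec n (x k))) b) * D b a := by
        rw [Finset.sum_comm]
        refine Finset.sum_congr rfl fun a _ => ?_
        refine Finset.sum_congr rfl fun b _ => ?_
        have e1 : (star (pvec n (x k))) a = (starRingEnd ℂ) (pvec n (x k) a) := rfl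
        have e2 : (starRingEnd ℂ) ((star (pvec n (x k))) b) = pvec n (x k) b := star_star _
        rw [e1, e2, hconj_pvec, pvec_eq, pow_add]
        ring
      rw [step]
      exact hTtrue k
    -- antidiagonal vanishing
    have hC1 := antidiag_vanish hn x hx0 hxmono
      (fun j l => Complex.exp (-((Real.pi : ℂ) * Complex.I / (2 * (n : ℂ)))) ^ (j : ℕ)
          * Complex.exp ((Real.pi : ℂ) * Complex.I / (2 * (n : ℂ))) ^ (l : ℕ) * D j l)
      (fun j => by show _ * D j j = 0; rw [hdiagD j, mul_zero]) heval_false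
    have hC2 := antidiag_vanish hn x hx0 hxmono
      (fun j l => Complex.exp ((Real.pi : ℂ) * Complex.I / (2 * (n : ℂ))) ^ (j : ℕ)
          * Complex.exp (-((Real.pi : ℂ) * Complex.I / (2 * (n : ℂ)))) ^ (l : ℕ) * D j l)
      (fun j => by show _ * D j j = 0; rw [hdiagD j, mul_zero]) heval_true
    -- maximal nonzero pair
    have hex : ∃ p : Fin n × Fin n, D p.1 p.2 ≠ 0 ∧ (p.1 : ℕ) < (p.2 : ℕ) := by
      have hex0 : ∃ j k, D j k ≠ 0 := by
        by_contra hcon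
        push_neg at hcon
        apply hDne
        ext j k
        rw [hcon j k]
        rfl
      obtain ⟨j, k, hjk⟩ := hex0
      rcases lt_trichotomy (j : ℕ) (k : ℕ) with h | h | h
      · exact ⟨(j, k), hjk, h⟩
      · exact absurd (by rw [Fin.val_injective h]; exact hdiagD k) hjk
      · refine ⟨(k, j), ?_, h⟩
        rw [← hherm j k]
        intro h0
        exact hjk (by simpa using congrArg (starRingEnd ℂ) h0)
    set S : Finset (Fin n × Fin n) :=
      Finset.univ.filter (fun p => D p.1 p.2 ≠ 0 ∧ (p.1 : ℕ) < (p.2 : ℕ)) with hS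
    have hSne : S.Nonempty := by
      obtain ⟨p, h1, h2⟩ := hex
      refine ⟨p, ?_⟩
      simp only [hS, Finset.mem_filter, Finset.mem_univ, true_and]
      exact ⟨h1, h2⟩
    obtain ⟨p0, hp0S, hp0max⟩ := Finset.exists_max_image S
      (fun p => (p.1 : ℕ) + (p.2 : ℕ)) hSne
    have hp0 : D p0.1 p0.2 ≠ 0 ∧ (p0.1 : ℕ) < (p0.2 : ℕ) := by
      have := hp0S
      simp only [hS, Finset.mem_filter, Finset.mem_univ, true_and] at this
      exact this
    set a : Fin n := p0.1 with ha
    set b : Fin n := p0.2 with hb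
    have hDab : D a b ≠ 0 := hp0.1
    have hab : (a : ℕ) < (b : ℕ) := hp0.2
    have hmax : ∀ j k : Fin n, (a : ℕ) + (b : ℕ) < (j : ℕ) + (k : ℕ) → D j k = 0 := by
      intro j k hjk
      by_contra hnz
      rcases lt_trichotomy (j : ℕ) (k : ℕ) with h | h | h
      · have hmem : (j, k) ∈ S := by
          simp only [hS, Finset.mem_filter, Finset.mem_univ, true_and]
          exact ⟨hnz, h⟩
        have := hp0max _ hmem
        simp only at this
        omega
      · exact hnz (by rw [Fin.val_injective h]; exact hdiagD k)
      · have hkj : D k j ≠ 0 := by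
          intro h0
          apply hnz
          rw [← hherm k j, h0, map_zero]
        have hmem : (k, j) ∈ S := by
          simp only [hS, Finset.mem_filter, Finset.mem_univ, true_and]
          exact ⟨hkj, h⟩
        have := hp0max _ hmem
        simp only at this
        omega
    by_cases hsec : ∃ p : Fin n × Fin n, (p.1 : ℕ) < (p.2 : ℕ)
        ∧ (p.1 : ℕ) + (p.2 : ℕ) = (a : ℕ) + (b : ℕ) ∧ p ≠ (a, b) ∧ D p.1 p.2 ≠ 0
    · obtain ⟨⟨c, d⟩, hcd, hsum2, hpne, hDcd⟩ := hsec
      simp only at hcd hsum2 hDcd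
      rcases lt_trichotomy (a : ℕ) (c : ℕ) with h | h | h
      · exact core_contra X X' hX hrank hX' D hD hherm hdiagD a b c d hab hcd h hsum2.symm
          hDab hDcd hmax
      · exfalso
        apply hpne
        have hac : a = c := Fin.val_injective h
        have hbd : b = d := Fin.val_injective (by omega)
        rw [hac, hbd]
      · apply core_contra X X' hX hrank hX' D hD hherm hdiagD c d a b hcd hab h (by omega)
          hDcd hDab
        intro j k hjk
        exact hmax j k (by omega)
    · push_neg at hsec
      have hzeroD : ∀ p : Fin n × Fin n, p ≠ (a, b) → p ≠ (b, a) →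
          (p.1 : ℕ) + (p.2 : ℕ) = (a : ℕ) + (b : ℕ) → D p.1 p.2 = 0 := by
        rintro ⟨j, l⟩ hne1 hne2 hs
        simp only at hs ⊢
        rcases lt_trichotomy (j : ℕ) (l : ℕ) with h | h | h
        · exact hsec (j, l) h hs hne1
        · rw [Fin.val_injective h]; exact hdiagD l
        · have hlj : D l j = 0 := by
            apply hsec (l, j) h (show (l : ℕ) + (j : ℕ) = (a : ℕ) + (b : ℕ) by omega)
            intro hq
            apply hne2
            have h1 : l = a := congrArg Prod.fst hq
            have h2 : j = b := congrArg Prod.snd hq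
            rw [h1, h2]
          rw [← hherm l j, hlj, map_zero]
      have hne2' : ((a, b) : Fin n × Fin n) ≠ (b, a) := by
        intro hq
        have h1 : a = b := congrArg Prod.fst hq
        rw [h1] at hab
        omega
      have h1 := hC1 ((a : ℕ) + (b : ℕ))
      have h2 := hC2 ((a : ℕ) + (b : ℕ))
      rw [double_sum_eq_two _ a b b a hne2' (by
        rintro ⟨j, l⟩ hp1 hp2
        simp only
        split_ifs with hs
        · rw [hzeroD (j, l) hp1 hp2 hs, mul_zero]
        · rfl)] at h1
      rw [double_sum_eq_two _ a b b a hne2' (by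
        rintro ⟨j, l⟩ hp1 hp2
        simp only
        split_ifs with hs
        · rw [hzeroD (j, l) hp1 hp2 hs, mul_zero]
        · rfl)] at h2
      beta_reduce at h1 h2
      rw [if_pos rfl, if_pos (by omega : (b : ℕ) + (a : ℕ) = (a : ℕ) + (b : ℕ))] at h1 h2
      rw [← hherm a b] at h1 h2
      apply hDab
      apply phase_elim hn a b hab b.isLt (D a b)
      · linear_combination h1
      · linear_combination h2
  · simp [Fintype.card_sum, Fintype.card_prod]
    omega
end
end

section
/- Let n ≥ 3 and 1 ≤ r ≤ ⌈n/2⌉−1. Let G_0 be a basis of the real subspace C_r^n of H(n). For each k ∈ {2r−1,…,2(n−r)−1}, let A_k, A'_k be totally non-singular real γ(n,k)×r matrices, and set G_k := (ι_k(A_k[0]), ι_k(iA'_k[0]), ι_k(A_k[1]), ι_k(iA'_k[1]), …, ι_k(A_k[r−1]), ι_k(iA'_k[r−1])), where A[l] denotes the l-th column of A. Let G be the concatenation G_0 ∪ G_{2r−1} ∪ G_{2r} ∪ … ∪ G_{2(n−r)−1}. Then the measurement M_G : H(n) → ℝ^{|G|}, X ↦ (tr(G_j X))_j, is r-complete, and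 |G| = 4r(n−r) + n − 2r. -/
open Matrix
open scoped ComplexOrder

noncomputable section

/-- The subspace `C_r^n ⊆ H(n)` of Hermitian matrices vanishing at the off-diagonal
positions `(i,j)` with `2r−1 ≤ i+j ≤ 2(n−r)−1`. -/
def CrnSet (n r : ℕ) : Set (Matrix (Fin n) (Fin n) ℂ) :=
  {X | X.IsHermitian ∧ ∀ i j : Fin n, i ≠ j →
    2 * r - 1 ≤ (i : ℕ) + (j : ℕ) → (i : ℕ) + (j : ℕ) ≤ 2 * (n - r) - 1 → X i j = 0}

/-- A matrix is totally non-singular if every minor (the determinant of every square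
submatrix) is nonzero. -/
def TotallyNonSingular {K : Type*} [CommRing K] {a b : ℕ} (A : Matrix (Fin a) (Fin b) K) :
    Prop :=
  ∀ (s : ℕ) (f : Fin s → Fin a) (g : Fin s → Fin b),
    StrictMono f → StrictMono g → (A.submatrix f g).det ≠ 0

/-- `γ(n,k)`, the length of the upper half of the `k`-th anti-diagonal of an `n×n` matrix:
`⌈k/2⌉` if `k ≤ n−1` and `⌈n−1−k/2⌉` otherwise. -/
def gam (n k : ℕ) : ℕ := if k ≤ n - 1 then (k + 1) / 2 else n - 1 - k / 2

/-- Extension of a finite vector by zero. -/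
def pad {m : ℕ} (v : Fin m → ℂ) : ℕ → ℂ := fun i => if h : i < m then v ⟨i, h⟩ else 0

/-- The inclusion `ι_k : ℂ^{γ(n,k)} → H(n)` into the upper half of the `k`-th anti-diagonal:
`(ι_k(v))_{jl} = v_j/√2` if `j+l = k`, `j < l`; `(ι_k(v))_{jl} = conj(v_l)/√2` if `j+l = k`,
`l < j`; and `0` otherwise.  (The entries of `v` are indexed by the position along the upper
half of the anti-diagonal, whose rows start at `k − (n−1)` when `k > n−1`.) -/
noncomputable def iota (n k : ℕ) (v : Fin (gam n k) → ℂ) : Matrix (Fin n) (Fin n) ℂ :=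
  fun j l =>
    if (j : ℕ) + (l : ℕ) = k ∧ (j : ℕ) < (l : ℕ) then
      pad v ((j : ℕ) - (k - (n - 1))) / (Real.sqrt 2 : ℂ)
    else if (j : ℕ) + (l : ℕ) = k ∧ (l : ℕ) < (j : ℕ) then
      starRingEnd ℂ (pad v ((l : ℕ) - (k - (n - 1)))) / (Real.sqrt 2 : ℂ)
    else 0


-- ===== auxiliary development =====

lemma herm_pair {N : ℕ} (B : Matrix (Fin N) (Fin N) ℂ) (hB : B.IsHermitian)
    (x y : Fin N → ℂ) :
    star x ⬝ᵥ B.mulVec y = starRingEnd ℂ (star y ⬝ᵥ B.mulVec x) := by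
  have h0 : starRingEnd ℂ (star y ⬝ᵥ B.mulVec x) = star (star y ⬝ᵥ B.mulVec x) := rfl
  have h2 : star (star y ⬝ᵥ B.mulVec x) = star (B.mulVec x) ⬝ᵥ y := by
    rw [star_dotProduct, star_star]
  rw [h0, h2, star_mulVec, hB.eq, Matrix.dotProduct_mulVec]

lemma herm_cs {N : ℕ} (B : Matrix (Fin N) (Fin N) ℂ) (hB : B.IsHermitian)
    {u s : Fin N → ℂ} (hu : star u ⬝ᵥ B.mulVec u = 0)
    (h : ∀ t : ℂ, (star (s + t • u) ⬝ᵥ B.mulVec (s + t • u)).re ≤ 0) :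
    star u ⬝ᵥ B.mulVec s = 0 := by
  set w := star u ⬝ᵥ B.mulVec s with hw
  by_contra hne
  have hns : 0 < Complex.normSq w := by
    simpa [Complex.normSq_pos] using hne
  set R : ℝ := (1 + |(star s ⬝ᵥ B.mulVec s).re|) / Complex.normSq w with hR
  have hRpos : 0 < R := by positivity
  have hexp : ∀ t : ℂ, star (s + t • u) ⬝ᵥ B.mulVec (s + t • u)
      = star s ⬝ᵥ B.mulVec s + t * (starRingEnd ℂ w) + (starRingEnd ℂ t) * w := by
    intro t
    have hsm : star (t • u) = (starRingEnd ℂ t) • star u := by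
      simp [star_smul]
    have h1 : star s ⬝ᵥ B.mulVec u = starRingEnd ℂ w := herm_pair B hB s u
    rw [star_add, hsm, Matrix.mulVec_add, Matrix.mulVec_smul]
    simp only [add_dotProduct, dotProduct_add, smul_dotProduct, dotProduct_smul,
      smul_eq_mul]
    rw [← hw, h1, hu]
    ring
  have hle := h ((R : ℂ) * w)
  rw [hexp] at hle
  have hcw : (starRingEnd ℂ w) * w = (Complex.normSq w : ℂ) := by
    rw [mul_comm, Complex.mul_conj]
  have hconj : ((R : ℂ) * w) * (starRingEnd ℂ w) = (R * Complex.normSq w : ℝ) := by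
    rw [mul_assoc, Complex.mul_conj]
    push_cast
    ring
  have hconj2 : (starRingEnd ℂ ((R : ℂ) * w)) * w = (R * Complex.normSq w : ℝ) := by
    rw [_root_.map_mul, mul_assoc, hcw, Complex.conj_ofReal]
    push_cast; ring
  rw [hconj, hconj2] at hle
  have hRw : R * Complex.normSq w = 1 + |(star s ⬝ᵥ B.mulVec s).re| := by
    rw [hR, div_mul_cancel₀ _ hns.ne']
  simp only [Complex.add_re, Complex.ofReal_re, hRw] at hle
  have := abs_nonneg ((star s ⬝ᵥ B.mulVec s).re)
  cases abs_cases ((star s ⬝ᵥ B.mulVec s).re) <;> linarith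

lemma det_antitriangular_ne_zero {N : ℕ} (B : Matrix (Fin N) (Fin N) ℂ)
    (hzero : ∀ p q : Fin N, (p : ℕ) + q + 1 < N → B p q = 0)
    (hdiag : ∀ p q : Fin N, (p : ℕ) + q + 1 = N → B p q ≠ 0) :
    B.det ≠ 0 := by
  have hdet : (B.submatrix (⇑(Fin.revPerm : Equiv.Perm (Fin N))) id).det
      = (Equiv.Perm.sign (Fin.revPerm : Equiv.Perm (Fin N)) : ℤ) * B.det :=
    Matrix.det_permute _ B
  have htri : (B.submatrix (⇑(Fin.revPerm : Equiv.Perm (Fin N))) id).BlockTriangular id := by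
    intro p q hlt
    have hpq : (q : ℕ) < (p : ℕ) := hlt
    have hp := p.2
    simp only [Matrix.submatrix_apply, id_eq]
    apply hzero
    simp only [Fin.revPerm_apply, Fin.val_rev]
    omega
  have hval : (B.submatrix (⇑(Fin.revPerm : Equiv.Perm (Fin N))) id).det
      = ∏ p : Fin N, B (Fin.rev p) p := by
    rw [Matrix.det_of_upperTriangular htri]
    apply Finset.prod_congr rfl
    intro p _
    rfl
  have hne : (∏ p : Fin N, B (Fin.rev p) p) ≠ 0 := by
    apply Finset.prod_ne_zero_iff.2
    intro p _
    apply hdiag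
    have := p.2
    simp only [Fin.val_rev]
    omega
  intro h
  rw [h, mul_zero] at hdet
  rw [hdet] at hval
  exact hne hval.symm

/-- The subspace of vectors supported on the first `m` coordinates. -/
def firstHalf (N m : ℕ) : Submodule ℂ (Fin N → ℂ) where
  carrier := {v | ∀ q : Fin N, m ≤ (q : ℕ) → v q = 0}
  add_mem' := by intro a b ha hb q hq; simp [ha q hq, hb q hq]
  zero_mem' := by intro q hq; rfl
  smul_mem' := by intro c v hv q hq; simp [hv q hq]

lemma mem_firstHalf {N m : ℕ} (v : Fin N → ℂ) :
    v ∈ firstHalf N m ↔ ∀ q : Fin N, m ≤ (q : ℕ) → v q = 0 := Iff.rfl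

lemma finrank_firstHalf (N m : ℕ) (h : m ≤ N) :
    Module.finrank ℂ (firstHalf N m) = m := by
  have e : firstHalf N m ≃ₗ[ℂ] (Fin m → ℂ) :=
    { toFun := fun v t => (v : Fin N → ℂ) ⟨t, lt_of_lt_of_le t.2 h⟩
      map_add' := by intro a b; rfl
      map_smul' := by intro c v; rfl
      invFun := fun w => ⟨fun q => if hq : (q : ℕ) < m then w ⟨q, hq⟩ else 0, by
        intro q hq
        simp [Nat.not_lt.2 hq]⟩
      left_inv := by
        intro v
        ext q
        by_cases hq : (q : ℕ) < m
        · simp [hq]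
        · simp only [hq, dif_neg, not_false_iff]
          exact (v.2 q (Nat.not_lt.1 hq)).symm
      right_inv := by
        intro w
        funext t
        simp [t.2] }
  rw [e.finrank_eq]
  simp

lemma keyNSD {m : ℕ} (B : Matrix (Fin (2 * m)) (Fin (2 * m)) ℂ) (hB : B.IsHermitian)
    (hzero : ∀ p q : Fin (2 * m), (p : ℕ) + q + 1 < 2 * m → B p q = 0)
    (hdiag : ∀ p q : Fin (2 * m), (p : ℕ) + q + 1 = 2 * m → B p q ≠ 0)
    (S : Submodule ℂ (Fin (2 * m) → ℂ))
    (hS : ∀ s ∈ S, (star s ⬝ᵥ B.mulVec s).re ≤ 0) :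
    Module.finrank ℂ S ≤ m := by
  classical
  set P := firstHalf (2 * m) m with hP
  have hiso : ∀ u ∈ P, ∀ w ∈ P, star u ⬝ᵥ B.mulVec w = 0 := by
    intro u hu w hw
    show (∑ p, star (u p) * (B.mulVec w) p) = 0
    apply Finset.sum_eq_zero
    intro p _
    by_cases hp : m ≤ (p : ℕ)
    · rw [hu p hp, star_zero, zero_mul]
    · have hzero2 : B.mulVec w p = 0 := by
        show (∑ q, B p q * w q) = 0
        apply Finset.sum_eq_zero
        intro q _
        by_cases hq : m ≤ (q : ℕ)
        · rw [hw q hq, mul_zero]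
        · rw [hzero p q (by omega), zero_mul]
      rw [hzero2, mul_zero]
  set d := Module.finrank ℂ (↥(S ⊓ P)) with hd
  set u : Module.Basis (Fin d) ℂ (↥(S ⊓ P)) := Module.finBasisOfFinrankEq ℂ _ hd.symm with hu
  set M : Matrix (Fin d) (Fin (2 * m)) ℂ := fun i => star ((u i : Fin (2 * m) → ℂ)) ᵥ* B
    with hM
  have hMapp : ∀ (i : Fin d) (v : Fin (2 * m) → ℂ),
      M.mulVec v i = star ((u i : Fin (2 * m) → ℂ)) ⬝ᵥ B.mulVec v := by
    intro i v
    rw [Matrix.dotProduct_mulVec]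
    rfl
  have hker : S ⊔ P ≤ LinearMap.ker M.mulVecLin := by
    apply sup_le
    · intro s hs
      simp only [LinearMap.mem_ker]
      funext i
      have hui := (u i).2
      rw [Submodule.mem_inf] at hui
      have hq0 : star ((u i : Fin (2 * m) → ℂ)) ⬝ᵥ
          B.mulVec ((u i : Fin (2 * m) → ℂ)) = 0 := hiso _ hui.2 _ hui.2
      have hcs := herm_cs B hB hq0
        (fun t => hS _ (S.add_mem hs (S.smul_mem t hui.1)))
      show M.mulVec s i = 0
      rw [hMapp]
      exact hcs
    · intro p hp
      simp only [LinearMap.mem_ker]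
      funext i
      have hui := (u i).2
      rw [Submodule.mem_inf] at hui
      show M.mulVec p i = 0
      rw [hMapp]
      exact hiso _ hui.2 _ hp
  -- rows of M are linearly independent
  have hdet : B.det ≠ 0 := det_antitriangular_ne_zero B hzero hdiag
  have hrows : LinearIndependent ℂ (fun i : Fin d => M i) := by
    rw [Fintype.linearIndependent_iff]
    intro c hc
    have hsum : (∑ i, c i • star ((u i : Fin (2 * m) → ℂ))) ᵥ* B = 0 := by
      have : B.vecMulLinear (∑ i, c i • star ((u i : Fin (2 * m) → ℂ))) = 0 := by
        rw [map_sum]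
        rw [show (0 : Fin (2*m) → ℂ) = ∑ i, c i • M i from hc.symm]
        apply Finset.sum_congr rfl
        intro i _
        rw [_root_.map_smul]
        rfl
      rw [← Matrix.vecMulLinear_apply]
      exact this
    have hw0 : (∑ i, c i • star ((u i : Fin (2 * m) → ℂ))) = 0 := by
      have hunit : IsUnit B.det := isUnit_iff_ne_zero.2 hdet
      have h2 : ((∑ i, c i • star ((u i : Fin (2 * m) → ℂ))) ᵥ* B) ᵥ* B⁻¹
          = (0 : Fin (2 * m) → ℂ) ᵥ* B⁻¹ := by rw [hsum]
      rwa [Matrix.vecMul_vecMul, Matrix.mul_nonsing_inv B hunit, Matrix.vecMul_one,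
        Matrix.zero_vecMul] at h2
    have hstar := congrArg star hw0
    simp only [star_sum, star_smul, star_star, star_zero] at hstar
    have hindep : LinearIndependent ℂ (fun i => ((u i : Fin (2 * m) → ℂ))) := by
      have := u.linearIndependent
      exact this.map' (Submodule.subtype _) (Submodule.ker_subtype _)
    rw [Fintype.linearIndependent_iff] at hindep
    intro i
    have := hindep (fun i => star (c i)) (by simpa using hstar) i
    simpa using congrArg star this
  have hrank : M.rank = d := by
    rw [← Matrix.rank_transpose, Matrix.rank_eq_finrank_span_cols]
    rw [show Set.range Mᵀ.col = Set.range (fun i : Fin d => M i) from rfl]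
    rw [finrank_span_eq_card hrows]
    simp
  have hfr : Module.finrank ℂ (LinearMap.range M.mulVecLin) = d := hrank
  have hrn := LinearMap.finrank_range_add_finrank_ker M.mulVecLin
  rw [hfr] at hrn
  have hdim1 : Module.finrank ℂ ↥(S ⊔ P) ≤ Module.finrank ℂ (LinearMap.ker M.mulVecLin) :=
    Submodule.finrank_mono hker
  have hdim2 := Submodule.finrank_sup_add_finrank_inf_eq S P
  rw [finrank_firstHalf (2 * m) m (by omega), ← hd] at hdim2
  have hfin : Module.finrank ℂ (Fin (2 * m) → ℂ) = 2 * m := by simp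
  omega


def OutBand (n r : ℕ) (i j : Fin n) : Prop :=
  (i : ℕ) + (j : ℕ) < 2 * r - 1 ∨ 2 * (n - r) - 1 < (i : ℕ) + (j : ℕ)

instance (n r : ℕ) (i j : Fin n) : Decidable (OutBand n r i j) := by
  unfold OutBand; infer_instance

abbrev OPT (n r : ℕ) : Type := {p : Fin n × Fin n // p.1 < p.2 ∧ OutBand n r p.1 p.2}

def bmat (n r : ℕ) : (Fin n ⊕ OPT n r × Bool) → Matrix (Fin n) (Fin n) ℂ
  | Sum.inl i => Matrix.single i i 1
  | Sum.inr (p, false) => Matrix.single p.1.1 p.1.2 1 + Matrix.single p.1.2 p.1.1 1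
  | Sum.inr (p, true) => Complex.I • Matrix.single p.1.1 p.1.2 1
      - Complex.I • Matrix.single p.1.2 p.1.1 1

lemma std_apply {n : ℕ} (i j a b : Fin n) (z : ℂ) :
    Matrix.single i j z a b = if i = a ∧ j = b then z else 0 := by
  simp [Matrix.single]

lemma std_conjT {n : ℕ} (i j : Fin n) :
    (Matrix.single i j (1 : ℂ))ᴴ = Matrix.single j i 1 := by
  ext a b
  rw [Matrix.conjTranspose_apply, std_apply, std_apply]
  by_cases h : i = b ∧ j = a
  · rw [if_pos h, if_pos ⟨h.2, h.1⟩]; simp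
  · rw [if_neg h, if_neg (fun hh => h ⟨hh.2, hh.1⟩)]; simp

lemma diag_entry_sum (n r : ℕ) (c : Fin n ⊕ OPT n r × Bool → ℝ) (a b : Fin n) :
    (∑ i : Fin n, c (Sum.inl i) • bmat n r (Sum.inl i)) a b
      = if a = b then ((c (Sum.inl a) : ℝ) : ℂ) else 0 := by
  classical
  rw [Matrix.sum_apply]
  by_cases hab : a = b
  · subst hab
    rw [if_pos rfl, Finset.sum_eq_single_of_mem a (Finset.mem_univ a)
      (fun i _ hia => by
        simp only [bmat, Matrix.smul_apply, Complex.real_smul, std_apply]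
        rw [if_neg (fun h => hia h.1), mul_zero])]
    simp only [bmat, Matrix.smul_apply, Complex.real_smul, std_apply]
    simp
  · rw [if_neg hab]
    apply Finset.sum_eq_zero
    intro i _
    simp only [bmat, Matrix.smul_apply, Complex.real_smul, std_apply]
    have : ¬(i = a ∧ i = b) := by rintro ⟨rfl, rfl⟩; exact hab rfl
    rw [if_neg this, mul_zero]

lemma pair_entry (n r : ℕ) (c : Fin n ⊕ OPT n r × Bool → ℝ) (p : OPT n r) (a b : Fin n)
    (hne : ¬(p.1.1 = a ∧ p.1.2 = b)) (hne' : ¬(p.1.2 = a ∧ p.1.1 = b)) :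
    (c (Sum.inr (p, false)) • bmat n r (Sum.inr (p, false))) a b
      + (c (Sum.inr (p, true)) • bmat n r (Sum.inr (p, true))) a b = 0 := by
  simp only [bmat, Matrix.smul_apply, Matrix.add_apply, Matrix.sub_apply,
    Complex.real_smul, smul_eq_mul, std_apply]
  rw [if_neg hne, if_neg hne']
  simp

lemma pair_entry_self (n r : ℕ) (c : Fin n ⊕ OPT n r × Bool → ℝ) (p : OPT n r) :
    (c (Sum.inr (p, false)) • bmat n r (Sum.inr (p, false))) p.1.1 p.1.2
      + (c (Sum.inr (p, true)) • bmat n r (Sum.inr (p, true))) p.1.1 p.1.2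
      = ((c (Sum.inr (p, false)) : ℝ) : ℂ) + (c (Sum.inr (p, true)) : ℝ) * Complex.I := by
  have hne : ¬((p.1.2 = p.1.1) ∧ (p.1.1 = p.1.2)) := by
    rintro ⟨h, -⟩
    have := p.2.1
    rw [h] at this
    exact lt_irrefl _ this
  simp only [bmat, Matrix.smul_apply, Matrix.add_apply, Matrix.sub_apply,
    Complex.real_smul, smul_eq_mul, std_apply]
  rw [if_neg hne]
  simp
  try ring

lemma pair_entry_self' (n r : ℕ) (c : Fin n ⊕ OPT n r × Bool → ℝ) (p : OPT n r) :
    (c (Sum.inr (p, false)) • bmat n r (Sum.inr (p, false))) p.1.2 p.1.1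
      + (c (Sum.inr (p, true)) • bmat n r (Sum.inr (p, true))) p.1.2 p.1.1
      = ((c (Sum.inr (p, false)) : ℝ) : ℂ) - (c (Sum.inr (p, true)) : ℝ) * Complex.I := by
  have hne : ¬((p.1.1 = p.1.2) ∧ (p.1.2 = p.1.1)) := by
    rintro ⟨h, -⟩
    have := p.2.1
    rw [h] at this
    exact lt_irrefl _ this
  simp only [bmat, Matrix.smul_apply, Matrix.add_apply, Matrix.sub_apply,
    Complex.real_smul, smul_eq_mul, std_apply]
  rw [if_neg hne]
  simp
  try ring

lemma pairs_entry_sum (n r : ℕ) (c : Fin n ⊕ OPT n r × Bool → ℝ) (a b : Fin n) :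
    (∑ x : OPT n r × Bool, c (Sum.inr x) • bmat n r (Sum.inr x)) a b
      = (if h : a < b ∧ OutBand n r a b then
          ((c (Sum.inr (⟨(a, b), h⟩, false)) : ℝ) : ℂ)
            + (c (Sum.inr (⟨(a, b), h⟩, true)) : ℝ) * Complex.I else 0)
        + (if h : b < a ∧ OutBand n r b a then
          ((c (Sum.inr (⟨(b, a), h⟩, false)) : ℝ) : ℂ)
            - (c (Sum.inr (⟨(b, a), h⟩, true)) : ℝ) * Complex.I else 0) := by
  classical
  rw [Matrix.sum_apply, Fintype.sum_prod_type]
  have hpt : ∀ p : OPT n r, ∑ t : Bool, (c (Sum.inr (p, t)) • bmat n r (Sum.inr (p, t))) a b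
      = (c (Sum.inr (p, false)) • bmat n r (Sum.inr (p, false))) a b
        + (c (Sum.inr (p, true)) • bmat n r (Sum.inr (p, true))) a b := by
    intro p
    rw [Fintype.sum_bool]
    ring
  rw [Finset.sum_congr rfl (fun p _ => hpt p)]
  by_cases h1 : a < b ∧ OutBand n r a b
  · rw [dif_pos h1]
    have h2 : ¬(b < a ∧ OutBand n r b a) := by
      rintro ⟨hb, -⟩; exact absurd (lt_trans h1.1 hb) (lt_irrefl a)
    rw [dif_neg h2, add_zero, Finset.sum_eq_single_of_mem (⟨(a, b), h1⟩ : OPT n r)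
      (Finset.mem_univ _) (fun p _ hp => pair_entry n r c p a b
        (by rintro ⟨h3, h4⟩; exact hp (Subtype.ext (Prod.ext h3 h4)))
        (by rintro ⟨h3, h4⟩
            have := p.2.1
            rw [h3, h4] at this
            exact absurd (lt_trans h1.1 this) (lt_irrefl a)))]
    exact pair_entry_self n r c ⟨(a, b), h1⟩
  · rw [dif_neg h1, zero_add]
    by_cases h2 : b < a ∧ OutBand n r b a
    · rw [dif_pos h2, Finset.sum_eq_single_of_mem (⟨(b, a), h2⟩ : OPT n r)
        (Finset.mem_univ _) (fun p _ hp => pair_entry n r c p a b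
          (by rintro ⟨h3, h4⟩
              have := p.2.1
              rw [h3, h4] at this
              exact absurd (lt_trans h2.1 this) (lt_irrefl b))
          (by rintro ⟨h3, h4⟩; exact hp (Subtype.ext (Prod.ext h4 h3))))]
      exact pair_entry_self' n r c ⟨(b, a), h2⟩
    · rw [dif_neg h2]
      apply Finset.sum_eq_zero
      intro p _
      apply pair_entry
      · rintro ⟨h3, h4⟩
        exact h1 (by rw [← h3, ← h4]; exact p.2)
      · rintro ⟨h3, h4⟩
        exact h2 (by rw [← h3, ← h4]; exact p.2)

lemma bmat_indep (n r : ℕ) : LinearIndependent ℝ (bmat n r) := by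
  classical
  rw [Fintype.linearIndependent_iff]
  intro g hg
  have hent : ∀ a b : Fin n, (∑ x, g x • bmat n r x) a b = 0 := by
    intro a b; rw [hg]; rfl
  have hsplit : ∀ a b : Fin n, (∑ x, g x • bmat n r x) a b
      = (∑ i : Fin n, g (Sum.inl i) • bmat n r (Sum.inl i)) a b
        + (∑ x : OPT n r × Bool, g (Sum.inr x) • bmat n r (Sum.inr x)) a b := by
    intro a b
    rw [Fintype.sum_sum_type, Matrix.add_apply]
  have hdiag : ∀ i : Fin n, g (Sum.inl i) = 0 := by
    intro i
    have h0 := hent i i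
    rw [hsplit, diag_entry_sum, pairs_entry_sum] at h0
    have h1 : ¬(i < i ∧ OutBand n r i i) := by rintro ⟨h, -⟩; exact lt_irrefl i h
    rw [if_pos rfl, dif_neg h1, dif_neg h1, add_zero, add_zero] at h0
    exact_mod_cast h0
  have hpair : ∀ (p : OPT n r) (t : Bool), g (Sum.inr (p, t)) = 0 := by
    intro p t
    have h0 := hent p.1.1 p.1.2
    rw [hsplit, diag_entry_sum, pairs_entry_sum] at h0
    have hne : ¬(p.1.1 = p.1.2) := by
      intro h; exact absurd p.2.1 (by rw [h]; exact lt_irrefl _)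
    have h2 : ¬(p.1.2 < p.1.1 ∧ OutBand n r p.1.2 p.1.1) := by
      rintro ⟨h, -⟩; exact absurd (lt_trans p.2.1 h) (lt_irrefl _)
    rw [if_neg hne, dif_pos ⟨p.2.1, p.2.2⟩, dif_neg h2, zero_add, add_zero] at h0
    have hre := congrArg Complex.re h0
    have him := congrArg Complex.im h0
    simp only [Complex.add_re, Complex.ofReal_re, Complex.mul_re, Complex.I_re,
      Complex.I_im, Complex.ofReal_im, Complex.add_im, Complex.mul_im, Complex.zero_re,
      Complex.zero_im] at hre him
    have hp : (⟨(p.1.1, p.1.2), ⟨p.2.1, p.2.2⟩⟩ : OPT n r) = p := by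
      apply Subtype.ext
      exact Prod.ext rfl rfl
    rw [hp] at hre him
    cases t
    · linarith
    · linarith
  intro x
  rcases x with i | ⟨p, t⟩
  · exact hdiag i
  · exact hpair p t

lemma bmat_mem (n r : ℕ) (x : Fin n ⊕ OPT n r × Bool) :
    bmat n r x ∈ CrnSet n r := by
  classical
  constructor
  · rcases x with i | ⟨p, t⟩
    · show (Matrix.single i i (1 : ℂ))ᴴ = Matrix.single i i (1 : ℂ)
      exact std_conjT i i
    · rcases t with _ | _
      · show (Matrix.single p.1.1 p.1.2 (1 : ℂ) + Matrix.single p.1.2 p.1.1 (1 : ℂ))ᴴ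
          = Matrix.single p.1.1 p.1.2 (1 : ℂ) + Matrix.single p.1.2 p.1.1 (1 : ℂ)
        rw [Matrix.conjTranspose_add, std_conjT, std_conjT]
        exact add_comm _ _
      · show (Complex.I • Matrix.single p.1.1 p.1.2 (1 : ℂ)
            - Complex.I • Matrix.single p.1.2 p.1.1 (1 : ℂ))ᴴ
          = Complex.I • Matrix.single p.1.1 p.1.2 (1 : ℂ)
            - Complex.I • Matrix.single p.1.2 p.1.1 (1 : ℂ)
        rw [Matrix.conjTranspose_sub, Matrix.conjTranspose_smul, Matrix.conjTranspose_smul,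
          std_conjT, std_conjT]
        simp only [Complex.star_def, Complex.conj_I, neg_smul]
        module
  · intro i j hij hlow hhigh
    rcases x with a | ⟨p, t⟩
    · show Matrix.single a a (1 : ℂ) i j = 0
      rw [std_apply, if_neg]
      rintro ⟨rfl, rfl⟩; exact hij rfl
    · have hout := p.2.2
      have hne1 : ¬(p.1.1 = i ∧ p.1.2 = j) := by
        rintro ⟨rfl, rfl⟩
        unfold OutBand at hout
        omega
      have hne2 : ¬(p.1.2 = i ∧ p.1.1 = j) := by
        rintro ⟨rfl, rfl⟩
        unfold OutBand at hout
        omega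
      rcases t with _ | _
      · show (Matrix.single p.1.1 p.1.2 (1 : ℂ) + Matrix.single p.1.2 p.1.1 (1 : ℂ)) i j = 0
        rw [Matrix.add_apply, std_apply, std_apply, if_neg hne1, if_neg hne2]
        simp
      · show (Complex.I • Matrix.single p.1.1 p.1.2 (1 : ℂ)
            - Complex.I • Matrix.single p.1.2 p.1.1 (1 : ℂ)) i j = 0
        rw [Matrix.sub_apply, Matrix.smul_apply, Matrix.smul_apply, std_apply, std_apply,
          if_neg hne1, if_neg hne2]
        simp

lemma bmat_span (n r : ℕ) (X : Matrix (Fin n) (Fin n) ℂ) (hX : X ∈ CrnSet n r) :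
    X ∈ Submodule.span ℝ (Set.range (bmat n r)) := by
  classical
  obtain ⟨hherm, hband⟩ := hX
  set c : Fin n ⊕ OPT n r × Bool → ℝ := fun x =>
    match x with
    | Sum.inl i => (X i i).re
    | Sum.inr (p, false) => (X p.1.1 p.1.2).re
    | Sum.inr (p, true) => (X p.1.1 p.1.2).im
    with hc
  have hsplit : ∀ a b : Fin n, (∑ x, c x • bmat n r x) a b
      = (∑ i : Fin n, c (Sum.inl i) • bmat n r (Sum.inl i)) a b
        + (∑ x : OPT n r × Bool, c (Sum.inr x) • bmat n r (Sum.inr x)) a b := by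
    intro a b
    rw [Fintype.sum_sum_type, Matrix.add_apply]
  have hXeq : X = ∑ x, c x • bmat n r x := by
    ext a b
    rw [hsplit, diag_entry_sum, pairs_entry_sum]
    by_cases hab : a = b
    · subst hab
      have h1 : ¬(a < a ∧ OutBand n r a a) := by rintro ⟨h, -⟩; exact lt_irrefl a h
      rw [if_pos rfl, dif_neg h1, dif_neg h1, add_zero, add_zero]
      have hreal : (starRingEnd ℂ) (X a a) = X a a := congr_fun (congr_fun hherm.eq a) a
      exact (Complex.conj_eq_iff_re.1 hreal).symm
    · rw [if_neg hab]
      by_cases hout : OutBand n r a b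
      · have houtsym : OutBand n r b a := by
          unfold OutBand at hout ⊢; omega
        rcases lt_or_gt_of_ne hab with h | h
        · rw [dif_pos ⟨h, hout⟩,
            dif_neg (by rintro ⟨h2, -⟩; exact absurd (lt_trans h h2) (lt_irrefl a)),
            add_zero, zero_add]
          exact (Complex.re_add_im _).symm
        · rw [dif_neg (by rintro ⟨h2, -⟩; exact absurd (lt_trans h h2) (lt_irrefl b)),
            dif_pos ⟨h, houtsym⟩, zero_add, zero_add]
          have hconj : X a b = (starRingEnd ℂ) (X b a) :=
            (congr_fun (congr_fun hherm.eq a) b).symm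
          rw [hconj, Complex.ext_iff]
          constructor <;> simp [hc]
      · have houtsym : ¬ OutBand n r b a := by
          unfold OutBand at hout ⊢; omega
        rw [dif_neg (fun h => hout h.2), dif_neg (fun h => houtsym h.2), add_zero, zero_add]
        unfold OutBand at hout
        exact hband a b hab (by omega) (by omega)
  rw [hXeq]
  exact Submodule.sum_mem _ (fun x _ =>
    Submodule.smul_mem _ _ (Submodule.subset_span (Set.mem_range_self x)))


section counting

lemma gauss2 (s : ℕ) : ∑ i ∈ Finset.range s, 2 * (i + 1) = s * (s + 1) := by
  induction s with
  | zero => simp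
  | succ s ih => rw [Finset.sum_range_succ, ih]; ring

lemma card_filter_Ico (n a b : ℕ) (hb : b ≤ n) :
    (Finset.univ.filter (fun j : Fin n => a ≤ (j : ℕ) ∧ (j : ℕ) < b)).card = b - a := by
  have hbij := Finset.card_bij (fun (j : Fin n) (_ : j ∈ Finset.univ.filter
      (fun j : Fin n => a ≤ (j : ℕ) ∧ (j : ℕ) < b)) => (j : ℕ))
    (t := Finset.Ico a b)
    (by intro j hj; simp only [Finset.mem_filter] at hj; exact Finset.mem_Ico.2 hj.2)
    (by intro j1 h1 j2 h2 h; exact Fin.ext h)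
    (by intro x hx
        rw [Finset.mem_Ico] at hx
        exact ⟨⟨x, lt_of_lt_of_le hx.2 hb⟩,
          Finset.mem_filter.2 ⟨Finset.mem_univ _, hx⟩, rfl⟩)
  rw [hbij, Nat.card_Ico]

lemma card_low (n r : ℕ) (h2r : 2 * r ≤ n) :
    (Finset.univ.filter (fun p : Fin n × Fin n =>
      p.1 < p.2 ∧ (p.1 : ℕ) + (p.2 : ℕ) < 2 * r - 1)).card = r * (r - 1) := by
  classical
  rw [Finset.card_filter, Fintype.sum_prod_type]
  have hin : ∀ i : Fin n,
      (∑ j : Fin n, if i < j ∧ (i : ℕ) + (j : ℕ) < 2 * r - 1 then 1 else 0)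
      = (2 * r - 1 - (i : ℕ)) - ((i : ℕ) + 1) := by
    intro i
    rw [← Finset.card_filter]
    have hcong : Finset.univ.filter (fun j : Fin n => i < j ∧ (i : ℕ) + (j : ℕ) < 2 * r - 1)
        = Finset.univ.filter (fun j : Fin n =>
            (i : ℕ) + 1 ≤ (j : ℕ) ∧ (j : ℕ) < 2 * r - 1 - (i : ℕ)) := by
      apply Finset.filter_congr
      intro j _
      rw [Fin.lt_def]
      constructor <;> intro h <;> omega
    rw [hcong, card_filter_Ico n _ _ (by omega)]
  rw [Finset.sum_congr rfl (fun i _ => hin i),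
    Fin.sum_univ_eq_sum_range (fun i => 2 * r - 1 - i - (i + 1)) n]
  have hsub : ∑ i ∈ Finset.range n, (2 * r - 1 - i - (i + 1))
      = ∑ i ∈ Finset.range (r - 1), (2 * r - 1 - i - (i + 1)) := by
    symm
    apply Finset.sum_subset
    · apply Finset.range_subset_range.2; omega
    · intro i _ hi
      rw [Finset.mem_range] at hi
      omega
  rw [hsub]
  have hterm : ∀ i ∈ Finset.range (r - 1),
      2 * r - 1 - i - (i + 1) = 2 * ((r - 1) - 1 - i + 1) := by
    intro i hi
    rw [Finset.mem_range] at hi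
    omega
  rw [Finset.sum_congr rfl hterm, Finset.sum_range_reflect (fun i => 2 * (i + 1)) (r - 1),
    gauss2]
  cases r with
  | zero => simp
  | succ r => simp [Nat.succ_sub_one]; ring

lemma card_high (n r : ℕ) (hrn : r ≤ n) :
    (Finset.univ.filter (fun p : Fin n × Fin n =>
      p.1 < p.2 ∧ 2 * (n - r) - 1 < (p.1 : ℕ) + (p.2 : ℕ))).card
    = (Finset.univ.filter (fun p : Fin n × Fin n =>
      p.1 < p.2 ∧ (p.1 : ℕ) + (p.2 : ℕ) < 2 * r - 1)).card := by
  classical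
  apply Finset.card_bij (fun (p : Fin n × Fin n) _ => ((p.2.rev, p.1.rev) : Fin n × Fin n))
  · intro p hp
    simp only [Finset.mem_filter, Finset.mem_univ, true_and] at hp ⊢
    have h1 := p.1.2
    have h2 := p.2.2
    have hlt : (p.1 : ℕ) < (p.2 : ℕ) := hp.1
    constructor
    · rw [Fin.lt_def]
      simp only [Fin.val_rev]
      omega
    · simp only [Fin.val_rev]
      omega
  · intro p1 h1 p2 h2 h
    rw [Prod.ext_iff] at h ⊢
    obtain ⟨ha, hb⟩ := h
    exact ⟨Fin.rev_injective (by simpa using hb), Fin.rev_injective (by simpa using ha)⟩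
  · intro q hq
    simp only [Finset.mem_filter, Finset.mem_univ, true_and] at hq
    refine ⟨(q.2.rev, q.1.rev), ?_, ?_⟩
    · simp only [Finset.mem_filter, Finset.mem_univ, true_and]
      have h1 := q.1.2
      have h2 := q.2.2
      have hlt : (q.1 : ℕ) < (q.2 : ℕ) := hq.1
      constructor
      · rw [Fin.lt_def]
        simp only [Fin.val_rev]
        omega
      · simp only [Fin.val_rev]
        omega
    · simp [Prod.ext_iff]

lemma card_OPT (n r : ℕ) (hr : 1 ≤ r) (h2r : 2 * r ≤ n - 1) (hn : 1 ≤ n) :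
    Fintype.card (OPT n r) = 2 * (r * (r - 1)) := by
  classical
  rw [Fintype.card_subtype]
  have hiff : ∀ p : Fin n × Fin n, (p.1 < p.2 ∧ OutBand n r p.1 p.2) ↔
      ((p.1 < p.2 ∧ (p.1 : ℕ) + (p.2 : ℕ) < 2 * r - 1)
        ∨ (p.1 < p.2 ∧ 2 * (n - r) - 1 < (p.1 : ℕ) + (p.2 : ℕ))) := by
    intro p
    unfold OutBand
    tauto
  rw [Finset.filter_congr (fun p _ => hiff p), Finset.filter_or,
    Finset.card_union_of_disjoint, card_low n r (by omega), card_high n r (by omega),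
    card_low n r (by omega)]
  · ring
  · rw [Finset.disjoint_left]
    intro p hp1 hp2
    simp only [Finset.mem_filter, Finset.mem_univ, true_and] at hp1 hp2
    have h1 := p.1.2
    have h2 := p.2.2
    omega

end counting


lemma tns_support {γ r : ℕ} (A : Matrix (Fin γ) (Fin r) ℝ) (hA : TotallyNonSingular A)
    (x : Fin γ → ℝ) (hx : ∀ l : Fin r, ∑ j, A j l * x j = 0) (hxne : x ≠ 0) :
    r + 1 ≤ (Finset.univ.filter (fun j => x j ≠ 0)).card := by
  classical
  by_contra hcon
  push_neg at hcon
  set F := Finset.univ.filter (fun j => x j ≠ 0) with hF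
  set s := F.card with hs
  have hsr : s ≤ r := by omega
  set e := F.orderIsoOfFin rfl with he
  set f : Fin s → Fin γ := fun t => (e t : Fin γ) with hf
  have hfmono : StrictMono f := fun a b hab => by
    have := e.strictMono hab
    exact this
  set g : Fin s → Fin r := fun t => Fin.castLE hsr t with hg
  have hgmono : StrictMono g := fun a b hab => by
    rw [Fin.lt_def] at hab ⊢; exact hab
  have hdet := hA s f g hfmono hgmono
  have hsum : ∀ l : Fin r, ∑ t : Fin s, A (f t) l * x (f t) = 0 := by
    intro l
    have hbij : ∑ t : Fin s, A (f t) l * x (f t) = ∑ j ∈ F, A j l * x j := by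
      apply Finset.sum_bij (fun (t : Fin s) _ => f t)
      · intro t _
        exact (e t).2
      · intro t1 _ t2 _ hth
        exact hfmono.injective hth
      · intro j hj
        exact ⟨e.symm ⟨j, hj⟩, Finset.mem_univ _, by simp [hf]⟩
      · intro t _
        rfl
    rw [hbij]
    rw [Finset.sum_subset (Finset.subset_univ F)]
    · exact hx l
    · intro j _ hj
      have : ¬ x j ≠ 0 := by
        intro hne
        exact hj (Finset.mem_filter.2 ⟨Finset.mem_univ _, hne⟩)
      rw [not_not.1 this, mul_zero]
  have hmv : (A.submatrix f g)ᵀ.mulVec (fun t => x (f t)) = 0 := by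
    funext l
    show (∑ t, (A.submatrix f g)ᵀ l t * x (f t)) = 0
    have : ∀ t : Fin s, (A.submatrix f g)ᵀ l t = A (f t) (g l) := fun t => rfl
    rw [Finset.sum_congr rfl (fun t _ => by rw [this t])]
    exact hsum (g l)
  have hdetT : ((A.submatrix f g)ᵀ).det ≠ 0 := by
    rw [Matrix.det_transpose]
    exact hdet
  have hx0 : (fun t => x (f t)) = 0 :=
    Matrix.eq_zero_of_mulVec_eq_zero hdetT hmv
  have hFne : F.Nonempty := by
    rcases Function.ne_iff.1 hxne with ⟨j, hj⟩
    exact ⟨j, Finset.mem_filter.2 ⟨Finset.mem_univ _, hj⟩⟩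
  obtain ⟨j, hj⟩ := hFne
  have hjx : x j ≠ 0 := (Finset.mem_filter.1 hj).2
  have : x (f (e.symm ⟨j, hj⟩)) = 0 := congr_fun hx0 _
  rw [show f (e.symm ⟨j, hj⟩) = j from by simp [hf]] at this
  exact hjx this




lemma gam_idx {n k : ℕ} (hn : 3 ≤ n) (hk2 : k ≤ 2 * n - 3) (i : ℕ) (hi : i < gam n k) :
    (k - (n - 1)) + i < n ∧ 2 * ((k - (n - 1)) + i) < k := by
  unfold gam at hi
  by_cases h : k ≤ n - 1
  · rw [if_pos h] at hi
    omega
  · rw [if_neg h] at hi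
    omega

/-- row index of the `i`-th position of the upper half of antidiagonal `k`. -/
def jdx {n k : ℕ} (hn : 3 ≤ n) (hk2 : k ≤ 2 * n - 3) (i : Fin (gam n k)) : Fin n :=
  ⟨(k - (n - 1)) + i, (gam_idx hn hk2 i i.2).1⟩

def ldx {n k : ℕ} (hn : 3 ≤ n) (hk2 : k ≤ 2 * n - 3) (i : Fin (gam n k)) : Fin n :=
  ⟨k - ((k - (n - 1)) + i), by
    have h := gam_idx hn hk2 i i.2
    omega⟩

lemma jdx_add_ldx {n k : ℕ} (hn : 3 ≤ n) (hk2 : k ≤ 2 * n - 3) (i : Fin (gam n k)) :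
    ((jdx hn hk2 i : ℕ)) + ((ldx hn hk2 i : ℕ)) = k := by
  have h := gam_idx hn hk2 i i.2
  simp only [jdx, ldx]
  omega

lemma jdx_lt_ldx {n k : ℕ} (hn : 3 ≤ n) (hk2 : k ≤ 2 * n - 3) (i : Fin (gam n k)) :
    ((jdx hn hk2 i : ℕ)) < ((ldx hn hk2 i : ℕ)) := by
  have h := gam_idx hn hk2 i i.2
  simp only [jdx, ldx]
  omega

lemma iota_jl {n k : ℕ} (hn : 3 ≤ n) (hk2 : k ≤ 2 * n - 3) (v : Fin (gam n k) → ℂ)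
    (i : Fin (gam n k)) :
    iota n k v (jdx hn hk2 i) (ldx hn hk2 i) = v i / (Real.sqrt 2 : ℂ) := by
  unfold iota
  rw [if_pos ⟨jdx_add_ldx hn hk2 i, jdx_lt_ldx hn hk2 i⟩]
  congr 1
  show pad v ((k - (n - 1)) + (i : ℕ) - (k - (n - 1))) = v i
  rw [Nat.add_sub_cancel_left]
  unfold pad
  rw [dif_pos i.2]

lemma iota_lj {n k : ℕ} (hn : 3 ≤ n) (hk2 : k ≤ 2 * n - 3) (v : Fin (gam n k) → ℂ)
    (i : Fin (gam n k)) :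
    iota n k v (ldx hn hk2 i) (jdx hn hk2 i) = starRingEnd ℂ (v i) / (Real.sqrt 2 : ℂ) := by
  unfold iota
  have hlt := jdx_lt_ldx hn hk2 i
  have hadd := jdx_add_ldx hn hk2 i
  rw [if_neg (by omega), if_pos ⟨by omega, hlt⟩]
  congr 2
  show pad v ((k - (n - 1)) + (i : ℕ) - (k - (n - 1))) = v i
  rw [Nat.add_sub_cancel_left]
  unfold pad
  rw [dif_pos i.2]

/-- if an entry of `iota` is nonzero then it lies at one of the indexed positions. -/
lemma iota_support {n k : ℕ} (hn : 3 ≤ n) (hk2 : k ≤ 2 * n - 3) (v : Fin (gam n k) → ℂ)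
    (p q : Fin n) (hne : iota n k v p q ≠ 0) :
    ∃ i : Fin (gam n k), (p = jdx hn hk2 i ∧ q = ldx hn hk2 i)
      ∨ (p = ldx hn hk2 i ∧ q = jdx hn hk2 i) := by
  unfold iota at hne
  by_cases h1 : (p : ℕ) + (q : ℕ) = k ∧ (p : ℕ) < (q : ℕ)
  · rw [if_pos h1] at hne
    have hpad : pad v ((p : ℕ) - (k - (n - 1))) ≠ 0 := by
      intro h; rw [h] at hne; simp at hne
    unfold pad at hpad
    by_cases h2 : (p : ℕ) - (k - (n - 1)) < gam n k
    · refine ⟨⟨(p : ℕ) - (k - (n - 1)), h2⟩, Or.inl ⟨?_, ?_⟩⟩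
      · apply Fin.ext
        show (p : ℕ) = (k - (n - 1)) + ((p : ℕ) - (k - (n - 1)))
        have hq := q.2
        omega
      · apply Fin.ext
        show (q : ℕ) = k - ((k - (n - 1)) + ((p : ℕ) - (k - (n - 1))))
        have hq := q.2
        omega
    · rw [dif_neg h2] at hpad
      exact absurd rfl hpad
  · rw [if_neg h1] at hne
    by_cases h2 : (p : ℕ) + (q : ℕ) = k ∧ (q : ℕ) < (p : ℕ)
    · rw [if_pos h2] at hne
      have hpad : pad v ((q : ℕ) - (k - (n - 1))) ≠ 0 := by
        intro h; rw [h] at hne; simp at hne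
      unfold pad at hpad
      by_cases h3 : (q : ℕ) - (k - (n - 1)) < gam n k
      · refine ⟨⟨(q : ℕ) - (k - (n - 1)), h3⟩, Or.inr ⟨?_, ?_⟩⟩
        · apply Fin.ext
          show (p : ℕ) = k - ((k - (n - 1)) + ((q : ℕ) - (k - (n - 1))))
          have hp := p.2
          omega
        · apply Fin.ext
          show (q : ℕ) = (k - (n - 1)) + ((q : ℕ) - (k - (n - 1)))
          have hp := p.2
          omega
      · rw [dif_neg h3] at hpad
        exact absurd rfl hpad
    · rw [if_neg h2] at hne
      exact absurd rfl hne

lemma trace_iota_mul {n k : ℕ} (hn : 3 ≤ n) (hk2 : k ≤ 2 * n - 3)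
    (v : Fin (gam n k) → ℂ) (Y : Matrix (Fin n) (Fin n) ℂ) :
    (iota n k v * Y).trace
      = ∑ i : Fin (gam n k),
          (v i * Y (ldx hn hk2 i) (jdx hn hk2 i)
            + starRingEnd ℂ (v i) * Y (jdx hn hk2 i) (ldx hn hk2 i)) / (Real.sqrt 2 : ℂ) := by
  classical
  have htr : (iota n k v * Y).trace
      = ∑ x : Fin n × Fin n, iota n k v x.1 x.2 * Y x.2 x.1 := by
    rw [Fintype.sum_prod_type]
    unfold Matrix.trace Matrix.diag
    apply Finset.sum_congr rfl
    intro p _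
    rfl
  rw [htr]
  set φ : Fin (gam n k) × Bool → Fin n × Fin n := fun x =>
    if x.2 then (ldx hn hk2 x.1, jdx hn hk2 x.1) else (jdx hn hk2 x.1, ldx hn hk2 x.1)
    with hφ
  have hφinj : ∀ x ∈ (Finset.univ : Finset (Fin (gam n k) × Bool)), ∀ y ∈ Finset.univ, φ x = φ y → x = y := by
    intro x _ y _ hxy
    have hj : ∀ i : Fin (gam n k), (jdx hn hk2 i : ℕ) = (k - (n-1)) + i := fun _ => rfl
    rcases x with ⟨i, bi⟩
    rcases y with ⟨i', bi'⟩
    simp only [hφ] at hxy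
    cases bi <;> cases bi' <;>
      simp only [Bool.false_eq_true, if_true, if_false, Prod.mk.injEq] at hxy
    · have hiv : (i : ℕ) = (i' : ℕ) := by
        have := congrArg (fun z : Fin n => (z : ℕ)) hxy.1
        simp only [jdx] at this
        omega
      rw [show i = i' from Fin.ext hiv]
    · exfalso
      have h1 := jdx_lt_ldx hn hk2 i
      have h2 := jdx_lt_ldx hn hk2 i'
      have e1 : (jdx hn hk2 i : ℕ) = (ldx hn hk2 i' : ℕ) :=
        congrArg (fun z : Fin n => (z : ℕ)) hxy.1
      have e2 : (ldx hn hk2 i : ℕ) = (jdx hn hk2 i' : ℕ) :=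
        congrArg (fun z : Fin n => (z : ℕ)) hxy.2
      omega
    · exfalso
      have h1 := jdx_lt_ldx hn hk2 i
      have h2 := jdx_lt_ldx hn hk2 i'
      have e1 : (ldx hn hk2 i : ℕ) = (jdx hn hk2 i' : ℕ) :=
        congrArg (fun z : Fin n => (z : ℕ)) hxy.1
      have e2 : (jdx hn hk2 i : ℕ) = (ldx hn hk2 i' : ℕ) :=
        congrArg (fun z : Fin n => (z : ℕ)) hxy.2
      omega
    · have hiv : (i : ℕ) = (i' : ℕ) := by
        have := congrArg (fun z : Fin n => (z : ℕ)) hxy.1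
        simp only [ldx] at this
        have h1 := gam_idx hn hk2 i i.2
        have h2 := gam_idx hn hk2 i' i'.2
        omega
      rw [show i = i' from Fin.ext hiv]
  have hset : ∑ x : Fin n × Fin n, iota n k v x.1 x.2 * Y x.2 x.1
      = ∑ x ∈ Finset.univ.image φ, iota n k v x.1 x.2 * Y x.2 x.1 := by
    symm
    apply Finset.sum_subset (Finset.subset_univ _)
    intro x _ hx
    by_contra hne
    have hne' : iota n k v x.1 x.2 ≠ 0 := by
      intro h; rw [h, zero_mul] at hne; exact hne rfl
    obtain ⟨i, hi⟩ := iota_support hn hk2 v x.1 x.2 hne'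
    apply hx
    rcases hi with ⟨h1, h2⟩ | ⟨h1, h2⟩
    · exact Finset.mem_image.2 ⟨(i, false), Finset.mem_univ _, by
        simp only [hφ, if_false, Bool.false_eq_true]
        rw [Prod.ext_iff]
        exact ⟨h1.symm, h2.symm⟩⟩
    · exact Finset.mem_image.2 ⟨(i, true), Finset.mem_univ _, by
        simp only [hφ, if_true]
        rw [Prod.ext_iff]
        exact ⟨h1.symm, h2.symm⟩⟩
  rw [hset, Finset.sum_image hφinj]
  rw [Fintype.sum_prod_type]
  apply Finset.sum_congr rfl
  intro i _
  rw [Fintype.sum_bool]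
  simp only [hφ, if_true, if_false, Bool.false_eq_true]
  rw [iota_jl, iota_lj]
  field_simp
  ring

-- ===== end auxiliary =====


lemma trace_std_mul {n : ℕ} (i j : Fin n) (c : ℂ) (Y : Matrix (Fin n) (Fin n) ℂ) :
    (Matrix.single i j c * Y).trace = c * Y j i := by
  classical
  have hterm : ∀ p, (Matrix.single i j c * Y) p p = if i = p then c * Y j p else 0 := by
    intro p
    rw [Matrix.mul_apply]
    by_cases hip : i = p
    · subst hip
      rw [if_pos rfl, Finset.sum_eq_single_of_mem j (Finset.mem_univ _)
        (fun q _ hq => by rw [std_apply, if_neg (fun h => hq h.2.symm), zero_mul])]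
      rw [std_apply, if_pos ⟨rfl, rfl⟩]
    · rw [if_neg hip]
      apply Finset.sum_eq_zero
      intro q _
      rw [std_apply, if_neg (fun h => hip h.1), zero_mul]
  show (∑ p, (Matrix.single i j c * Y) p p) = c * Y j i
  rw [Finset.sum_congr rfl (fun p _ => hterm p), Finset.sum_ite_eq Finset.univ i
    (fun p => c * Y j p)]
  simp

/-- the real-linear functional `C ↦ re tr(C Y)`. -/
def traceRe {n : ℕ} (Y : Matrix (Fin n) (Fin n) ℂ) :
    Matrix (Fin n) (Fin n) ℂ →ₗ[ℝ] ℝ where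
  toFun C := ((C * Y).trace).re
  map_add' C D := by
    simp [Matrix.add_mul]
  map_smul' c C := by
    simp [Matrix.smul_mul, Complex.real_smul]

lemma vanish_on_CrnSet {n r : ℕ} {ι₀ : Type*} (G0 : ι₀ → Matrix (Fin n) (Fin n) ℂ)
    (hG0span : ∀ X ∈ CrnSet n r, X ∈ Submodule.span ℝ (Set.range G0))
    (Y : Matrix (Fin n) (Fin n) ℂ)
    (hvan : ∀ i, ((G0 i * Y).trace).re = 0) :
    ∀ C ∈ CrnSet n r, ((C * Y).trace).re = 0 := by
  intro C hC
  have hle : Submodule.span ℝ (Set.range G0) ≤ LinearMap.ker (traceRe Y) := by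
    rw [Submodule.span_le]
    rintro _ ⟨i, rfl⟩
    exact hvan i
  exact hle (hG0span C hC)

lemma entries_vanish {n r : ℕ} (Y : Matrix (Fin n) (Fin n) ℂ) (hY : Y.IsHermitian)
    (hvan : ∀ C ∈ CrnSet n r, ((C * Y).trace).re = 0) :
    ∀ p q : Fin n, (p = q ∨ OutBand n r p q) → Y p q = 0 := by
  classical
  have hdiag : ∀ p : Fin n, Y p p = 0 := by
    intro p
    have hmem := bmat_mem n r (Sum.inl p)
    have h0 := hvan _ hmem
    rw [show bmat n r (Sum.inl p) = Matrix.single p p 1 from rfl, trace_std_mul, one_mul] at h0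
    have hconj : (starRingEnd ℂ) (Y p p) = Y p p := congr_fun (congr_fun hY.eq p) p
    rw [Complex.ext_iff]
    constructor
    · exact h0
    · have := Complex.conj_eq_iff_im.1 hconj
      simpa using this
  have hup : ∀ p q : Fin n, p < q → OutBand n r p q → Y p q = 0 := by
    intro p q hlt hout
    set P : OPT n r := ⟨(p, q), hlt, hout⟩ with hP
    have h0 := hvan _ (bmat_mem n r (Sum.inr (P, false)))
    have h1 := hvan _ (bmat_mem n r (Sum.inr (P, true)))
    have e0 : (bmat n r (Sum.inr (P, false)) * Y).trace = Y q p + Y p q := by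
      show ((Matrix.single p q 1 + Matrix.single q p 1) * Y).trace = _
      rw [Matrix.add_mul, Matrix.trace_add, trace_std_mul, trace_std_mul, one_mul, one_mul]
    have e1 : (bmat n r (Sum.inr (P, true)) * Y).trace
        = Complex.I * Y q p - Complex.I * Y p q := by
      show ((Complex.I • Matrix.single p q 1 - Complex.I • Matrix.single q p 1) * Y).trace = _
      rw [Matrix.sub_mul, Matrix.smul_mul, Matrix.smul_mul, Matrix.trace_sub,
        Matrix.trace_smul, Matrix.trace_smul, trace_std_mul, trace_std_mul, one_mul, one_mul]
      simp [smul_eq_mul]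
    rw [e0] at h0
    rw [e1] at h1
    have hconj : Y q p = (starRingEnd ℂ) (Y p q) := by
      have := congr_fun (congr_fun hY.eq q) p
      exact this.symm
    rw [hconj] at h0 h1
    set z := Y p q with hz
    have hre : ((starRingEnd ℂ) z + z).re = 2 * z.re := by
      simp [Complex.add_re]; ring
    have him : (Complex.I * (starRingEnd ℂ) z - Complex.I * z).re = 2 * z.im := by
      simp [Complex.mul_re, Complex.sub_re]; ring
    rw [hre] at h0
    rw [him] at h1
    rw [Complex.ext_iff]
    constructor <;> [skip; skip] <;> simp <;> linarith
  intro p q hpq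
  rcases hpq with rfl | hout
  · exact hdiag p
  · rcases lt_trichotomy p q with h | h | h
    · exact hup p q h hout
    · rw [h]; exact hdiag q
    · have houts : OutBand n r q p := by unfold OutBand at hout ⊢; omega
      have := hup q p h houts
      have hconj : Y p q = (starRingEnd ℂ) (Y q p) := by
        have := congr_fun (congr_fun hY.eq p) q
        exact this.symm
      rw [hconj, this]
      simp

lemma term_real (a : ℝ) (z : ℂ) :
    ((a : ℂ) * (starRingEnd ℂ) z + (starRingEnd ℂ) ((a : ℂ)) * z) / (Real.sqrt 2 : ℂ)
      = ((a * (2 * z.re) / Real.sqrt 2 : ℝ) : ℂ) := by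
  rw [Complex.conj_ofReal]
  rw [show (a : ℂ) * (starRingEnd ℂ) z + (a : ℂ) * z = (a : ℂ) * (z + (starRingEnd ℂ) z) by ring,
    Complex.add_conj]
  push_cast
  ring

lemma term_imag (a : ℝ) (z : ℂ) :
    ((Complex.I * (a : ℂ)) * (starRingEnd ℂ) z
        + (starRingEnd ℂ) (Complex.I * (a : ℂ)) * z) / (Real.sqrt 2 : ℂ)
      = ((a * (2 * z.im) / Real.sqrt 2 : ℝ) : ℂ) := by
  rw [_root_.map_mul, Complex.conj_ofReal, Complex.conj_I]
  rw [show Complex.I * (a : ℂ) * (starRingEnd ℂ) z + -Complex.I * (a : ℂ) * z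
      = -((a : ℂ) * Complex.I * (z - (starRingEnd ℂ) z)) by ring, Complex.sub_conj]
  push_cast
  rw [show -((a : ℂ) * Complex.I * (2 * (z.im : ℂ) * Complex.I)) / (Real.sqrt 2 : ℂ)
      = -((a : ℂ) * (2 * (z.im : ℂ)) * (Complex.I * Complex.I)) / (Real.sqrt 2 : ℂ) by ring,
    Complex.I_mul_I]
  ring

lemma exists_idx {n k : ℕ} (hn : 3 ≤ n) (hk2 : k ≤ 2 * n - 3) (p q : Fin n)
    (hsum : (p : ℕ) + (q : ℕ) = k) (hlt : (p : ℕ) < (q : ℕ)) :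
    ∃ i : Fin (gam n k), jdx hn hk2 i = p ∧ ldx hn hk2 i = q := by
  have hq := q.2
  have hp := p.2
  have hgam : (p : ℕ) - (k - (n - 1)) < gam n k := by
    unfold gam
    by_cases h : k ≤ n - 1
    · rw [if_pos h]; omega
    · rw [if_neg h]; omega
  refine ⟨⟨(p : ℕ) - (k - (n - 1)), hgam⟩, Fin.ext ?_, Fin.ext ?_⟩
  · show (k - (n - 1)) + ((p : ℕ) - (k - (n - 1))) = (p : ℕ)
    omega
  · show k - ((k - (n - 1)) + ((p : ℕ) - (k - (n - 1)))) = (q : ℕ)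
    omega

lemma conj_submatrix {n N : ℕ} (Y : Matrix (Fin n) (Fin n) ℂ) (a : Fin N → Fin n)
    (E : Matrix (Fin n) (Fin N) ℂ) (hE : ∀ i p, E i p = if a p = i then 1 else 0) :
    Eᴴ * Y * E = Matrix.of (fun p q => Y (a p) (a q)) := by
  classical
  ext p q
  have h1 : (Eᴴ * Y) p = fun l => Y (a p) l := by
    funext l
    rw [Matrix.mul_apply]
    rw [Finset.sum_eq_single_of_mem (a p) (Finset.mem_univ _)
      (fun j _ hj => by
        rw [Matrix.conjTranspose_apply, hE, if_neg (fun h => hj h.symm)]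
        simp)]
    rw [Matrix.conjTranspose_apply, hE, if_pos rfl]
    simp
  rw [Matrix.mul_apply]
  rw [Finset.sum_congr rfl (fun l _ => by rw [h1])]
  rw [Finset.sum_eq_single_of_mem (a q) (Finset.mem_univ _)
    (fun l _ hl => by rw [hE, if_neg (fun h => hl h.symm), mul_zero])]
  rw [hE, if_pos rfl, mul_one]
  rfl

lemma quad_form_conj {n N : ℕ} (Y : Matrix (Fin n) (Fin n) ℂ) (a : Fin N → Fin n)
    (z : Fin N → ℂ) :
    star z ⬝ᵥ (Matrix.of (fun p q => Y (a p) (a q))).mulVec z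
      = star ((Matrix.of (fun i p => if a p = i then (1:ℂ) else 0)).mulVec z) ⬝ᵥ
          Y.mulVec ((Matrix.of (fun i p => if a p = i then (1:ℂ) else 0)).mulVec z) := by
  classical
  set E : Matrix (Fin n) (Fin N) ℂ := Matrix.of (fun i p => if a p = i then (1:ℂ) else 0)
    with hEdef
  have hE : ∀ i p, E i p = if a p = i then 1 else 0 := fun i p => rfl
  rw [Matrix.star_mulVec, Matrix.dotProduct_mulVec (star z ᵥ* Eᴴ) Y _]
  rw [show star z ᵥ* Eᴴ ᵥ* Y = star z ᵥ* (Eᴴ * Y) from Matrix.vecMul_vecMul _ Eᴴ Y]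
  rw [← Matrix.dotProduct_mulVec, Matrix.mulVec_mulVec]
  rw [show (Eᴴ * Y) * E = Eᴴ * Y * E from rfl]
  rw [conj_submatrix Y a E hE]


lemma measOf_kernel {n' : ℕ} {ι : Type*} [Fintype ι] (G : ι → Matrix (Fin n') (Fin n') ℂ)
    {X X' : Matrix (Fin n') (Fin n') ℂ} (h : measOf G X = measOf G X') (idx : ι) :
    ((G idx * (X - X')).trace).re = 0 := by
  have h1 : ((G idx * X).trace).re = ((G idx * X').trace).re := congrArg (fun v => v idx) h
  rw [Matrix.mul_sub, Matrix.trace_sub, Complex.sub_re, h1, sub_self]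

lemma cons_re {n r k : ℕ} (hn : 3 ≤ n) (hk2 : k ≤ 2 * n - 3)
    (Ak : Matrix (Fin (gam n k)) (Fin r) ℝ) (Y : Matrix (Fin n) (Fin n) ℂ)
    (hYh : Y.IsHermitian) (l : Fin r)
    (h0 : ((iota n k (fun j => ((Ak j l : ℝ) : ℂ)) * Y).trace).re = 0) :
    ∑ i, Ak i l * (Y (jdx hn hk2 i) (ldx hn hk2 i)).re = 0 := by
  rw [trace_iota_mul hn hk2 _ Y] at h0
  have hterm1 : ∀ i ∈ Finset.univ, (((Ak i l : ℝ) : ℂ) * Y (ldx hn hk2 i) (jdx hn hk2 i)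
      + (starRingEnd ℂ) ((Ak i l : ℝ) : ℂ) * Y (jdx hn hk2 i) (ldx hn hk2 i))
        / (Real.sqrt 2 : ℂ)
      = ((Ak i l * (2 * (Y (jdx hn hk2 i) (ldx hn hk2 i)).re) / Real.sqrt 2 : ℝ) : ℂ) := by
    intro i _
    have hc : Y (ldx hn hk2 i) (jdx hn hk2 i)
        = (starRingEnd ℂ) (Y (jdx hn hk2 i) (ldx hn hk2 i)) := by
      have := congr_fun (congr_fun hYh.eq (ldx hn hk2 i)) (jdx hn hk2 i)
      rw [Matrix.conjTranspose_apply] at this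
      exact this.symm
    rw [hc]
    exact term_real (Ak i l) _
  rw [Finset.sum_congr rfl hterm1, ← Complex.ofReal_sum, Complex.ofReal_re] at h0
  have hfac : ∑ i, (Ak i l * (2 * (Y (jdx hn hk2 i) (ldx hn hk2 i)).re) / Real.sqrt 2)
      = (∑ i, Ak i l * (Y (jdx hn hk2 i) (ldx hn hk2 i)).re) * (2 / Real.sqrt 2) := by
    rw [Finset.sum_mul]
    apply Finset.sum_congr rfl
    intro i _
    ring
  rw [hfac] at h0
  have h2s : (2 : ℝ) / Real.sqrt 2 ≠ 0 := by positivity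
  exact (mul_eq_zero.1 h0).resolve_right h2s

lemma cons_im {n r k : ℕ} (hn : 3 ≤ n) (hk2 : k ≤ 2 * n - 3)
    (Ak : Matrix (Fin (gam n k)) (Fin r) ℝ) (Y : Matrix (Fin n) (Fin n) ℂ)
    (hYh : Y.IsHermitian) (l : Fin r)
    (h0 : ((iota n k (fun j => Complex.I * ((Ak j l : ℝ) : ℂ)) * Y).trace).re = 0) :
    ∑ i, Ak i l * (Y (jdx hn hk2 i) (ldx hn hk2 i)).im = 0 := by
  rw [trace_iota_mul hn hk2 _ Y] at h0
  have hterm1 : ∀ i ∈ Finset.univ,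
      ((Complex.I * ((Ak i l : ℝ) : ℂ)) * Y (ldx hn hk2 i) (jdx hn hk2 i)
      + (starRingEnd ℂ) (Complex.I * ((Ak i l : ℝ) : ℂ)) * Y (jdx hn hk2 i) (ldx hn hk2 i))
        / (Real.sqrt 2 : ℂ)
      = ((Ak i l * (2 * (Y (jdx hn hk2 i) (ldx hn hk2 i)).im) / Real.sqrt 2 : ℝ) : ℂ) := by
    intro i _
    have hc : Y (ldx hn hk2 i) (jdx hn hk2 i)
        = (starRingEnd ℂ) (Y (jdx hn hk2 i) (ldx hn hk2 i)) := by
      have := congr_fun (congr_fun hYh.eq (ldx hn hk2 i)) (jdx hn hk2 i)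
      rw [Matrix.conjTranspose_apply] at this
      exact this.symm
    rw [hc]
    exact term_imag (Ak i l) _
  rw [Finset.sum_congr rfl hterm1, ← Complex.ofReal_sum, Complex.ofReal_re] at h0
  have hfac : ∑ i, (Ak i l * (2 * (Y (jdx hn hk2 i) (ldx hn hk2 i)).im) / Real.sqrt 2)
      = (∑ i, Ak i l * (Y (jdx hn hk2 i) (ldx hn hk2 i)).im) * (2 / Real.sqrt 2) := by
    rw [Finset.sum_mul]
    apply Finset.sum_congr rfl
    intro i _
    ring
  rw [hfac] at h0
  have h2s : (2 : ℝ) / Real.sqrt 2 ≠ 0 := by positivity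
  exact (mul_eq_zero.1 h0).resolve_right h2s

lemma noPSD {n r : ℕ} (X X' : Matrix (Fin n) (Fin n) ℂ)
    (hX' : X'.PosSemidef) (hXrank : X.rank ≤ r) (k : ℕ)
    (hmin : ∀ p q : Fin n, (p : ℕ) + (q : ℕ) < k → (X - X') p q = 0)
    (hYh : (X - X').IsHermitian)
    (Jf Lf : Fin (r + 1) → Fin n)
    (hJL : ∀ t, (Jf t : ℕ) + (Lf t : ℕ) = k)
    (hJhalf : ∀ t, 2 * (Jf t : ℕ) < k)
    (hJmono : ∀ t s : Fin (r + 1), t < s → (Jf t : ℕ) < (Jf s : ℕ))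
    (hJne : ∀ t, (X - X') (Jf t) (Lf t) ≠ 0) : False := by
  classical
  set Y := X - X' with hYdef
  set af : Fin (2 * (r + 1)) → Fin n := fun p =>
    if h : (p : ℕ) < r + 1 then Jf ⟨p, h⟩
    else Lf ⟨2 * r + 1 - (p : ℕ), by have := p.isLt; omega⟩ with haf
  set B : Matrix (Fin (2 * (r + 1))) (Fin (2 * (r + 1))) ℂ :=
    Matrix.of (fun p q => Y (af p) (af q)) with hBdef
  have hBH : B.IsHermitian := by
    ext p q
    rw [Matrix.conjTranspose_apply]
    show star (Y (af q) (af p)) = Y (af p) (af q)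
    have := congr_fun (congr_fun hYh.eq (af p)) (af q)
    rw [Matrix.conjTranspose_apply] at this
    exact this
  have hzeroB : ∀ p q : Fin (2 * (r + 1)), (p : ℕ) + (q : ℕ) + 1 < 2 * (r + 1) →
      B p q = 0 := by
    intro p q hpq
    show Y (af p) (af q) = 0
    apply hmin
    by_cases hp : (p : ℕ) < r + 1 <;> by_cases hq : (q : ℕ) < r + 1
    · simp only [haf, dif_pos hp, dif_pos hq]
      have h1 := hJhalf ⟨p, hp⟩
      have h2 := hJhalf ⟨q, hq⟩
      omega
    · simp only [haf, dif_pos hp, dif_neg hq]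
      have hm := hJmono ⟨p, hp⟩ ⟨2 * r + 1 - (q : ℕ), by have := q.isLt; omega⟩
        (by show (p : ℕ) < 2 * r + 1 - (q : ℕ); omega)
      have hsumJL := hJL ⟨2 * r + 1 - (q : ℕ), by have := q.isLt; omega⟩
      omega
    · simp only [haf, dif_neg hp, dif_pos hq]
      have hm := hJmono ⟨q, hq⟩ ⟨2 * r + 1 - (p : ℕ), by have := p.isLt; omega⟩
        (by show (q : ℕ) < 2 * r + 1 - (p : ℕ); omega)
      have hsumJL := hJL ⟨2 * r + 1 - (p : ℕ), by have := p.isLt; omega⟩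
      omega
    · omega
  have hdiagB : ∀ p q : Fin (2 * (r + 1)), (p : ℕ) + (q : ℕ) + 1 = 2 * (r + 1) →
      B p q ≠ 0 := by
    intro p q hpq
    show Y (af p) (af q) ≠ 0
    by_cases hp : (p : ℕ) < r + 1
    · have hq : ¬ ((q : ℕ) < r + 1) := by omega
      simp only [haf, dif_pos hp, dif_neg hq]
      rw [show (⟨2 * r + 1 - (q : ℕ), by have := q.isLt; omega⟩ : Fin (r + 1))
          = ⟨p, hp⟩ from Fin.ext (by show 2 * r + 1 - (q : ℕ) = (p : ℕ); omega)]
      exact hJne ⟨p, hp⟩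
    · have hq : (q : ℕ) < r + 1 := by omega
      simp only [haf, dif_neg hp, dif_pos hq]
      rw [show (⟨2 * r + 1 - (p : ℕ), by have := p.isLt; omega⟩ : Fin (r + 1))
          = ⟨q, hq⟩ from Fin.ext (by show 2 * r + 1 - (p : ℕ) = (q : ℕ); omega)]
      intro hz
      apply hJne ⟨q, hq⟩
      have hcj := congr_fun (congr_fun hYh.eq (Jf ⟨q, hq⟩)) (Lf ⟨q, hq⟩)
      rw [Matrix.conjTranspose_apply] at hcj
      rw [← hcj, hz, star_zero]
  set E : Matrix (Fin n) (Fin (2 * (r + 1))) ℂ :=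
    Matrix.of (fun i p => if af p = i then (1 : ℂ) else 0) with hEdef
  set S : Submodule ℂ (Fin (2 * (r + 1)) → ℂ) := LinearMap.ker (X * E).mulVecLin with hSdef
  have hSq : ∀ z ∈ S, (star z ⬝ᵥ B.mulVec z).re ≤ 0 := by
    intro z hz
    have hB2 : star z ⬝ᵥ B.mulVec z
        = star (E.mulVec z) ⬝ᵥ Y.mulVec (E.mulVec z) := quad_form_conj Y af z
    rw [hB2]
    set w := E.mulVec z with hw
    have hXw : X.mulVec w = 0 := by
      rw [hw, Matrix.mulVec_mulVec]
      exact LinearMap.mem_ker.1 hz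
    have hYw : star w ⬝ᵥ Y.mulVec w = - (star w ⬝ᵥ X'.mulVec w) := by
      rw [hYdef, Matrix.sub_mulVec, dotProduct_sub, hXw, dotProduct_zero, zero_sub]
    rw [hYw]
    have hpos := hX'.dotProduct_mulVec_nonneg w
    have hposre : 0 ≤ (star w ⬝ᵥ X'.mulVec w).re := (Complex.le_def.1 hpos).1
    rw [Complex.neg_re]
    linarith
  have hkey := keyNSD B hBH hzeroB hdiagB S hSq
  have hrk : (X * E).rank ≤ r := le_trans (Matrix.rank_mul_le_left X E) hXrank
  have hrnk := LinearMap.finrank_range_add_finrank_ker (X * E).mulVecLin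
  have hrange : Module.finrank ℂ (LinearMap.range (X * E).mulVecLin) = (X * E).rank := rfl
  have hfull : Module.finrank ℂ (Fin (2 * (r + 1)) → ℂ) = 2 * (r + 1) := by simp
  rw [hrange, hfull] at hrnk
  have hSker : Module.finrank ℂ S = Module.finrank ℂ (LinearMap.ker (X * E).mulVecLin) := rfl
  omega

lemma card_part {n r : ℕ} (hn : 3 ≤ n) (hr : 1 ≤ r) (h2rn : 2 * r ≤ n - 1)
    {ι₀ : Type*} [Fintype ι₀] (G0 : ι₀ → Matrix (Fin n) (Fin n) ℂ)
    (hG0mem : ∀ i, G0 i ∈ CrnSet n r)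
    (hG0indep : LinearIndependent ℝ G0)
    (hG0span : ∀ X ∈ CrnSet n r, X ∈ Submodule.span ℝ (Set.range G0)) :
    Fintype.card (ι₀ ⊕ Fin (2 * n - 4 * r + 1) × Fin r × Bool) =
      4 * r * (n - r) + n - 2 * r := by
  have hsp : Submodule.span ℝ (Set.range G0) = Submodule.span ℝ (Set.range (bmat n r)) := by
    apply le_antisymm
    · rw [Submodule.span_le]
      rintro _ ⟨i, rfl⟩
      exact bmat_span n r _ (hG0mem i)
    · rw [Submodule.span_le]
      rintro _ ⟨x, rfl⟩
      exact hG0span _ (bmat_mem n r x)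
  have h2 := finrank_span_eq_card hG0indep
  rw [hsp, finrank_span_eq_card (bmat_indep n r)] at h2
  have h3 : Fintype.card (Fin n ⊕ OPT n r × Bool) = n + 2 * (r * (r - 1)) * 2 := by
    rw [Fintype.card_sum, Fintype.card_prod, Fintype.card_bool, Fintype.card_fin,
      card_OPT n r hr h2rn (by omega)]
  have h4 := h2.symm.trans h3
  rw [Fintype.card_sum, Fintype.card_prod, Fintype.card_prod, Fintype.card_bool,
    Fintype.card_fin, Fintype.card_fin, h4]
  obtain ⟨r', rfl⟩ : ∃ r', r = r' + 1 := ⟨r - 1, by omega⟩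
  obtain ⟨d, hd⟩ : ∃ d, n = 2 * (r' + 1) + 1 + d := ⟨n - (2 * (r' + 1) + 1), by omega⟩
  subst hd
  apply Nat.eq_sub_of_add_eq
  rw [show 2 * (2 * (r' + 1) + 1 + d) - 4 * (r' + 1) + 1 = 2 * d + 3 by omega,
    show 2 * (r' + 1) + 1 + d - (r' + 1) = r' + 2 + d by omega,
    show (r' + 1) * (r' + 1 - 1) = (r' + 1) * r' by rfl]
  ring

/-- with `G₀` a basis of `C_r^n` and, for each `k ∈ {2r−1,…,2(n−r)−1}`,
totally non-singular real `γ(n,k)×r` matrices `A_k, A'_k`, the measurement built from `G₀`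
together with `ι_k(A_k[l])` and `ι_k(i·A'_k[l])` for all columns `l` is `r`-complete, with
`4r(n−r) + n − 2r` outcomes. -/
theorem stmt5 {n r : ℕ} (hn : 3 ≤ n) (hr : 1 ≤ r) (hrn : r ≤ (n + 1) / 2 - 1)
    {ι₀ : Type*} [Fintype ι₀] (G0 : ι₀ → Matrix (Fin n) (Fin n) ℂ)
    (hG0mem : ∀ i, G0 i ∈ CrnSet n r)
    (hG0indep : LinearIndependent ℝ G0)
    (hG0span : ∀ X ∈ CrnSet n r, X ∈ Submodule.span ℝ (Set.range G0))
    (A A' : (k : ℕ) → Matrix (Fin (gam n k)) (Fin r) ℝ)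
    (hA : ∀ k, 2 * r - 1 ≤ k → k ≤ 2 * (n - r) - 1 → TotallyNonSingular (A k))
    (hA' : ∀ k, 2 * r - 1 ≤ k → k ≤ 2 * (n - r) - 1 → TotallyNonSingular (A' k)) :
    rComplete (measOf (fun idx : ι₀ ⊕ Fin (2 * n - 4 * r + 1) × Fin r × Bool =>
      match idx with
      | Sum.inl i => G0 i
      | Sum.inr (a, l, false) =>
          iota n (2 * r - 1 + (a : ℕ)) (fun j => ((A (2 * r - 1 + (a : ℕ)) j l : ℝ) : ℂ))
      | Sum.inr (a, l, true) =>
          iota n (2 * r - 1 + (a : ℕ))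
            (fun j => Complex.I * ((A' (2 * r - 1 + (a : ℕ)) j l : ℝ) : ℂ)))) r ∧
    Fintype.card (ι₀ ⊕ Fin (2 * n - 4 * r + 1) × Fin r × Bool) =
      4 * r * (n - r) + n - 2 * r := by
  classical
  have h2rn : 2 * r ≤ n - 1 := by omega
  constructor
  · intro X X' hX hXrank hX' hneq hMeq
    set Y := X - X' with hYdef
    have hYh : Y.IsHermitian := hX.1.sub hX'.1
    have hYne : Y ≠ 0 := sub_ne_zero.2 hneq
    have hvan0 : ∀ i : ι₀, ((G0 i * Y).trace).re = 0 := by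
      intro i
      rw [hYdef]
      exact measOf_kernel _ hMeq (Sum.inl i)
    have hvanC := vanish_on_CrnSet G0 hG0span Y hvan0
    have hent := entries_vanish (n := n) (r := r) Y hYh hvanC
    have hPk : ∃ k, ∃ p q : Fin n, (p : ℕ) + (q : ℕ) = k ∧ Y p q ≠ 0 := by
      by_contra hcon
      push_neg at hcon
      apply hYne
      ext p q
      exact hcon ((p : ℕ) + (q : ℕ)) p q rfl
    set k := Nat.find hPk with hkdef
    obtain ⟨p0, q0, hsum0, hne0⟩ := Nat.find_spec hPk
    have hmin : ∀ p q : Fin n, (p : ℕ) + (q : ℕ) < k → Y p q = 0 := by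
      intro p q hlt
      by_contra hne
      exact Nat.find_min hPk hlt ⟨p, q, rfl, hne⟩
    have hp0q0 : (p0 : ℕ) ≠ (q0 : ℕ) := fun h => hne0 (hent p0 q0 (Or.inl (Fin.ext h)))
    have hband0 : ¬ OutBand n r p0 q0 := fun h => hne0 (hent p0 q0 (Or.inr h))
    have hk1 : 2 * r - 1 ≤ k := by
      unfold OutBand at hband0
      omega
    have hk2' : k ≤ 2 * (n - r) - 1 := by
      unfold OutBand at hband0
      omega
    have hk2 : k ≤ 2 * n - 3 := by omega
    obtain ⟨pp, qq, hsum, hlt, hne⟩ : ∃ pp qq : Fin n,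
        (pp : ℕ) + (qq : ℕ) = k ∧ (pp : ℕ) < (qq : ℕ) ∧ Y pp qq ≠ 0 := by
      rcases lt_or_gt_of_ne hp0q0 with h | h
      · exact ⟨p0, q0, hsum0, h, hne0⟩
      · refine ⟨q0, p0, by omega, h, ?_⟩
        intro hz
        apply hne0
        have hcj : (starRingEnd ℂ) (Y q0 p0) = Y p0 q0 := by
          have := congr_fun (congr_fun hYh.eq p0) q0
          rw [Matrix.conjTranspose_apply] at this
          exact this
        rw [← hcj, hz, map_zero]
    obtain ⟨i0, hi0j, hi0l⟩ := exists_idx hn hk2 pp qq hsum hlt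
    have hy0 : Y (jdx hn hk2 i0) (ldx hn hk2 i0) ≠ 0 := by rw [hi0j, hi0l]; exact hne
    set a0 : Fin (2 * n - 4 * r + 1) := ⟨k - (2 * r - 1), by omega⟩ with ha0
    have hkeq : 2 * r - 1 + (a0 : ℕ) = k := by
      show 2 * r - 1 + (k - (2 * r - 1)) = k
      omega
    have hconsRe : ∀ l : Fin r,
        ∑ i, A k i l * (Y (jdx hn hk2 i) (ldx hn hk2 i)).re = 0 := by
      intro l
      apply cons_re hn hk2 (A k) Y hYh l
      have h0 : ((iota n (2 * r - 1 + (a0 : ℕ))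
          (fun j => ((A (2 * r - 1 + (a0 : ℕ)) j l : ℝ) : ℂ)) * Y).trace).re = 0 := by
        rw [hYdef]
        exact measOf_kernel _ hMeq (Sum.inr (a0, l, false))
      rw [hkeq] at h0
      exact h0
    have hconsIm : ∀ l : Fin r,
        ∑ i, A' k i l * (Y (jdx hn hk2 i) (ldx hn hk2 i)).im = 0 := by
      intro l
      apply cons_im hn hk2 (A' k) Y hYh l
      have h0 : ((iota n (2 * r - 1 + (a0 : ℕ))
          (fun j => Complex.I * ((A' (2 * r - 1 + (a0 : ℕ)) j l : ℝ) : ℂ)) * Y).trace).re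
          = 0 := by
        rw [hYdef]
        exact measOf_kernel _ hMeq (Sum.inr (a0, l, true))
      rw [hkeq] at h0
      exact h0
    have hsup : ∃ F : Finset (Fin (gam n k)), r + 1 ≤ F.card ∧
        ∀ i ∈ F, Y (jdx hn hk2 i) (ldx hn hk2 i) ≠ 0 := by
      by_cases hre : (fun i => (Y (jdx hn hk2 i) (ldx hn hk2 i)).re) = 0
      · have him0 : (fun i => (Y (jdx hn hk2 i) (ldx hn hk2 i)).im) ≠ 0 := by
          intro h
          apply hy0
          rw [Complex.ext_iff]
          exact ⟨congr_fun hre i0, congr_fun h i0⟩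
        have hts := tns_support (A' k) (hA' k hk1 hk2') _ hconsIm him0
        refine ⟨_, hts, fun i hi hz => (Finset.mem_filter.1 hi).2 ?_⟩
        rw [hz]
        rfl
      · have hts := tns_support (A k) (hA k hk1 hk2') _ hconsRe hre
        refine ⟨_, hts, fun i hi hz => (Finset.mem_filter.1 hi).2 ?_⟩
        rw [hz]
        rfl
    obtain ⟨F, hFcard, hFne⟩ := hsup
    obtain ⟨F', hF'sub, hF'card⟩ := Finset.exists_subset_card_eq hFcard
    set e := F'.orderIsoOfFin hF'card with he
    set Jf : Fin (r + 1) → Fin n := fun t => jdx hn hk2 ((e t : Fin (gam n k))) with hJf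
    set Lf : Fin (r + 1) → Fin n := fun t => ldx hn hk2 ((e t : Fin (gam n k))) with hLf
    have hJL : ∀ t, (Jf t : ℕ) + (Lf t : ℕ) = k := fun t => jdx_add_ldx hn hk2 _
    have hJhalf : ∀ t, 2 * (Jf t : ℕ) < k := by
      intro t
      exact (gam_idx hn hk2 ((e t : Fin (gam n k)) : ℕ) (Fin.is_lt _)).2
    have hJmono : ∀ t s : Fin (r + 1), t < s → (Jf t : ℕ) < (Jf s : ℕ) := by
      intro t s hts
      have h1 : (e t : Fin (gam n k)) < (e s : Fin (gam n k)) := e.strictMono hts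
      show (k - (n - 1)) + ((e t : Fin (gam n k)) : ℕ)
        < (k - (n - 1)) + ((e s : Fin (gam n k)) : ℕ)
      have h2 : ((e t : Fin (gam n k)) : ℕ) < ((e s : Fin (gam n k)) : ℕ) := h1
      omega
    have hJne : ∀ t, Y (Jf t) (Lf t) ≠ 0 := fun t => hFne _ (hF'sub (e t).2)
    exact noPSD X X' hX' hXrank k hmin hYh Jf Lf hJL hJhalf hJmono hJne
  · exact card_part hn hr h2rn G0 hG0mem hG0indep hG0span
end
end

section
/- Let 1 ≤ q ≤ n−1 and let A be a real n×q matrix that is totally non-singular. Then there exists a totally non-singular real n×(n−q) matrix B such that AᵗB = 0. -/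
open Matrix

noncomputable section

namespace Stmt8Aux

/-- a square real matrix with trivial `mulVec` kernel has unit determinant -/
lemma isUnit_of_trivial_ker {m : Type*} [Fintype m] [DecidableEq m] (N : Matrix m m ℝ)
    (h : ∀ v, N.mulVec v = 0 → v = 0) : IsUnit N := by
  rw [← Matrix.mulVec_injective_iff_isUnit]
  intro x y hxy
  have h0 : N.mulVec (x - y) = 0 := by rw [Matrix.mulVec_sub, hxy, sub_self]
  exact sub_eq_zero.mp (h _ h0)

lemma mulVec_eq_zero_of_det {m : Type*} [Fintype m] [DecidableEq m] (N : Matrix m m ℝ)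
    (hd : N.det ≠ 0) {v : m → ℝ} (h : N.mulVec v = 0) : v = 0 := by
  have hu : IsUnit N := (Matrix.isUnit_iff_isUnit_det N).mpr (isUnit_iff_ne_zero.mpr hd)
  have hinj := Matrix.mulVec_injective_iff_isUnit.mpr hu
  have := hinj (a₁ := v) (a₂ := 0) (by simpa using h)
  simpa using this

lemma vecMul_eq_zero_of_det {m : Type*} [Fintype m] [DecidableEq m] (N : Matrix m m ℝ)
    (hd : N.det ≠ 0) {v : m → ℝ} (h : N.vecMul v = 0) : v = 0 := by
  have hu : IsUnit N := (Matrix.isUnit_iff_isUnit_det N).mpr (isUnit_iff_ne_zero.mpr hd)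
  have hinj := Matrix.vecMul_injective_iff_isUnit.mpr hu
  have := hinj (a₁ := v) (a₂ := 0) (by simpa using h)
  simpa using this

/-- Gram matrix is a unit when `mulVec` has trivial kernel. -/
lemma gram_isUnit {a b : Type*} [Fintype a] [Fintype b] [DecidableEq b] (M : Matrix a b ℝ)
    (hM : ∀ v, M.mulVec v = 0 → v = 0) : IsUnit (Mᵀ * M) := by
  apply isUnit_of_trivial_ker
  intro v hv
  apply hM
  have h1 : v ⬝ᵥ (Mᵀ * M).mulVec v = 0 := by rw [hv, dotProduct_zero]
  rw [← Matrix.mulVec_mulVec, Matrix.dotProduct_mulVec, Matrix.vecMul_transpose,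
    dotProduct_self_eq_zero] at h1
  exact h1

/-- pick a strictly monotone selection of `k` indices inside a finset of size ≥ k -/
lemma exists_strictMono_subset {N k : ℕ} (t : Finset (Fin N)) (hk : k ≤ t.card) :
    ∃ h : Fin k → Fin N, StrictMono h ∧ ∀ j, h j ∈ t := by
  obtain ⟨t', ht't, ht'⟩ := Finset.exists_subset_card_eq hk
  refine ⟨fun j => (t'.orderIsoOfFin ht' j : Fin N), ?_, ?_⟩
  · intro a b hab
    exact (t'.orderIsoOfFin ht').strictMono hab
  · intro j
    exact ht't (t'.orderIsoOfFin ht' j).2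

lemma indicator_dot {n s : ℕ} {f : Fin s → Fin n} (hf : Function.Injective f)
    (w : Fin n → ℝ) (k : Fin s) :
    (∑ i, (if f k = i then (1 : ℝ) else 0) * w i) = w (f k) := by
  simp [ite_mul]

/-- Key construction: a matrix `W` with `AᵀW = 0` whose rows selected by `f` form the
identity matrix. -/
lemma exists_W {n q : ℕ} (A : Matrix (Fin n) (Fin q) ℝ) (hA : TotallyNonSingular A)
    {s : ℕ} (hs : s + q ≤ n) (f : Fin s → Fin n) (hf : StrictMono f) :
    ∃ W : Matrix (Fin n) (Fin s) ℝ, Aᵀ * W = 0 ∧ W.submatrix f id = 1 := by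
  classical
  set E : Matrix (Fin n) (Fin s) ℝ := fun i k => if f k = i then 1 else 0 with hE
  set M : Matrix (Fin n) (Fin q ⊕ Fin s) ℝ := Matrix.fromCols A E with hMdef
  have hMinj : ∀ v, M.mulVec v = 0 → v = 0 := by
    intro v hv
    set x : Fin q → ℝ := fun j => v (Sum.inl j) with hx
    set y : Fin s → ℝ := fun k => v (Sum.inr k) with hy
    have hv' : A.mulVec x + E.mulVec y = 0 := by
      have : v = Sum.elim x y := by funext p; cases p <;> rfl
      rw [← Matrix.fromCols_mulVec_sumElim A E x y, ← this, ← hMdef]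
      exact hv
    have hEy : ∀ i, E.mulVec y i = ∑ k, (if f k = i then (1:ℝ) else 0) * y k := by
      intro i; rfl
    -- rows outside range f kill E, giving (A x) = 0 there
    have hAx : ∀ i, i ∉ Set.range f → A.mulVec x i = 0 := by
      intro i hi
      have h0 : E.mulVec y i = 0 := by
        rw [hEy]
        apply Finset.sum_eq_zero
        intro k _
        rw [if_neg (fun hfk => hi ⟨k, hfk⟩), zero_mul]
      have := congrFun hv' i
      simpa [h0] using this
    -- choose q strictly monotone rows outside range f
    have hcard : q ≤ ((Finset.univ.image f)ᶜ : Finset (Fin n)).card := by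
      rw [Finset.card_compl, Finset.card_image_of_injective _ hf.injective]
      simp only [Finset.card_univ, Fintype.card_fin]
      omega
    obtain ⟨h, hhmono, hhmem⟩ := exists_strictMono_subset _ hcard
    have hhrange : ∀ j, h j ∉ Set.range f := by
      intro j hj
      have := hhmem j
      rw [Finset.mem_compl] at this
      apply this
      obtain ⟨k, hk⟩ := hj
      exact Finset.mem_image.mpr ⟨k, Finset.mem_univ k, hk⟩
    have hxz : x = 0 := by
      apply mulVec_eq_zero_of_det (A.submatrix h id)
      · exact hA q h id hhmono strictMono_id
      · funext j
        have : (A.submatrix h id).mulVec x j = A.mulVec x (h j) := by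
          simp [Matrix.mulVec, dotProduct]
        rw [this, hAx _ (hhrange j)]
        rfl
    have hyz : y = 0 := by
      funext k
      have h1 : E.mulVec y (f k) = y k := by
        rw [hEy]
        simp [hf.injective.eq_iff, ite_mul]
      have := congrFun hv' (f k)
      rw [hxz, Matrix.mulVec_zero] at this
      simpa [h1] using this
    funext p
    cases p with
    | inl j => exact congrFun hxz j
    | inr k => exact congrFun hyz k
  have hN : IsUnit (Mᵀ * M) := gram_isUnit M hMinj
  set N : Matrix (Fin q ⊕ Fin s) (Fin q ⊕ Fin s) ℝ := Mᵀ * M with hNdef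
  have hNdet : IsUnit N.det := (Matrix.isUnit_iff_isUnit_det N).mp hN
  set T : Matrix (Fin q ⊕ Fin s) (Fin s) ℝ := Matrix.fromRows 0 1 with hTdef
  set W : Matrix (Fin n) (Fin s) ℝ := M * (N⁻¹ * T) with hWdef
  have key : Mᵀ * W = T := by
    rw [hWdef, ← Matrix.mul_assoc, ← Matrix.mul_assoc, ← hNdef,
      Matrix.mul_nonsing_inv _ hNdet, Matrix.one_mul]
  refine ⟨W, ?_, ?_⟩
  · ext j k
    have h1 : (Aᵀ * W) j k = (Mᵀ * W) (Sum.inl j) k := by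
      simp [Matrix.mul_apply, hMdef, Matrix.fromCols]
    rw [h1, key]
    simp [hTdef]
  · ext k' k
    have h1 : (Mᵀ * W) (Sum.inr k') k = W (f k') k := by
      simp only [Matrix.mul_apply, Matrix.transpose_apply, hMdef, Matrix.fromCols]
      exact indicator_dot hf.injective (fun i => W i k) k'
    have h2 := congrFun (congrFun key (Sum.inr k')) k
    rw [h1] at h2
    rw [Matrix.submatrix_apply, id, h2]
    simp [hTdef]

end Stmt8Aux

open Stmt8Aux in
/-- for `1 ≤ q ≤ n−1` and a totally non-singular real `n×q` matrix `A`,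
there is a totally non-singular real `n×(n−q)` matrix `B` with `AᵗB = 0`. -/
theorem stmt8 {n q : ℕ} (hq1 : 1 ≤ q) (hqn : q ≤ n - 1)
    (A : Matrix (Fin n) (Fin q) ℝ) (hA : TotallyNonSingular A) :
    ∃ B : Matrix (Fin n) (Fin (n - q)) ℝ, TotallyNonSingular B ∧ Aᵀ * B = 0 := by
  classical
  have hqle : q ≤ n := by omega
  have hnq : (n - q) + q = n := by omega
  -- the base matrix B₀, columns spanning the kernel of Aᵀ
  set f₀ : Fin (n - q) → Fin n := Fin.castLE (Nat.sub_le n q) with hf₀def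
  have hf₀ : StrictMono f₀ := Fin.strictMono_castLE _
  obtain ⟨B₀, hB₀0, hB₀1⟩ := exists_W A hA (s := n - q) (by omega) f₀ hf₀
  -- the complementary ("tail") rows
  set htail : Fin q → Fin n := fun j => ⟨(n - q) + j.val, by omega⟩ with htaildef
  have htailmono : StrictMono htail := by
    intro a b hab
    simp only [htaildef, Fin.mk_lt_mk]
    omega
  -- B₀ evaluated on a coefficient vector returns the coefficients on the rows f₀
  have hcoef : ∀ (c : Fin (n - q) → ℝ) (m : Fin (n - q)), B₀.mulVec c (f₀ m) = c m := by
    intro c m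
    have h1 : (B₀.submatrix f₀ id).mulVec c m = B₀.mulVec c (f₀ m) := by
      simp [Matrix.mulVec, dotProduct]
    rw [hB₀1] at h1
    rw [← h1, Matrix.one_mulVec]
  -- every kernel vector of Aᵀ is a combination of the columns of B₀
  have hspan : ∀ w : Fin n → ℝ, Aᵀ.mulVec w = 0 → B₀.mulVec (fun m => w (f₀ m)) = w := by
    intro w hw
    set u : Fin n → ℝ := w - B₀.mulVec (fun m => w (f₀ m)) with hudef
    have hu1 : ∀ m, u (f₀ m) = 0 := by
      intro m
      simp only [hudef, Pi.sub_apply]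
      rw [hcoef, sub_self]
    have hu2 : Aᵀ.mulVec u = 0 := by
      rw [hudef, Matrix.mulVec_sub, hw, Matrix.mulVec_mulVec, hB₀0, Matrix.zero_mulVec, sub_self]
    -- split coordinates
    have hcases : ∀ i : Fin n, (∃ m, i = f₀ m) ∨ (∃ j, i = htail j) := by
      intro i
      by_cases hi : i.val < n - q
      · exact Or.inl ⟨⟨i.val, hi⟩, by apply Fin.ext; simp [hf₀def]⟩
      · exact Or.inr ⟨⟨i.val - (n - q), by omega⟩, by apply Fin.ext; simp [htaildef]; omega⟩
    have hsum : ∀ F : Fin n → ℝ, (∀ m, F (f₀ m) = 0) → ∑ i, F i = ∑ j, F (htail j) := by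
      intro F hF
      have he1 : ∀ m : Fin (n - q), (finSumFinEquiv.trans (finCongr hnq)) (Sum.inl m) = f₀ m := by
        intro m; apply Fin.ext
        simp [hf₀def, Equiv.trans_apply, finCongr_apply]
      have he2 : ∀ j : Fin q, (finSumFinEquiv.trans (finCongr hnq)) (Sum.inr j) = htail j := by
        intro j; apply Fin.ext
        simp [htaildef, Equiv.trans_apply, finCongr_apply]
      rw [← Equiv.sum_comp (finSumFinEquiv.trans (finCongr hnq)) F, Fintype.sum_sum_type]
      simp only [he1, he2, hF]
      simp
    have hz : (fun j => u (htail j)) = 0 := by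
      apply vecMul_eq_zero_of_det (A.submatrix htail id)
      · exact hA q htail id htailmono strictMono_id
      · funext j
        have h1 : ((A.submatrix htail id).vecMul fun j => u (htail j)) j
            = ∑ k, u (htail k) * A (htail k) j := by
          simp [Matrix.vecMul, dotProduct]
        rw [h1, Pi.zero_apply]
        have h2 := congrFun hu2 j
        have h3 : Aᵀ.mulVec u j = ∑ i, A i j * u i := by
          simp [Matrix.mulVec, dotProduct, mul_comm]
        rw [h3, Pi.zero_apply,
          hsum (fun i => A i j * u i) (fun m => by show A (f₀ m) j * u (f₀ m) = 0; rw [hu1, mul_zero])] at h2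
        rw [← h2]
        exact Finset.sum_congr rfl (fun k _ => mul_comm _ _)
    have hu0 : u = 0 := by
      funext i
      rcases hcases i with ⟨m, rfl⟩ | ⟨j, rfl⟩
      · exact hu1 m
      · exact congrFun hz j
    have := sub_eq_zero.mp (by rw [← hudef] at *; exact hu0 : w - B₀.mulVec (fun m => w (f₀ m)) = 0)
    exact this.symm
  -- each minor shape can be made nonzero by some coefficient matrix
  have keyminor : ∀ (s : ℕ) (f : Fin s → Fin n) (g : Fin s → Fin (n - q)),
      StrictMono f → StrictMono g →
      ∃ Cc : Matrix (Fin (n - q)) (Fin (n - q)) ℝ, ((B₀ * Cc).submatrix f g).det ≠ 0 := by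
    intro s f g hf hg
    have hsle : s ≤ n - q := by
      have := Fintype.card_le_of_injective g hg.injective
      simpa using this
    obtain ⟨W, hW0, hW1⟩ := exists_W A hA (s := s) (by omega) f hf
    set Cc : Matrix (Fin (n - q)) (Fin (n - q)) ℝ := fun m j' =>
      if h : ∃ k, g k = j' then W (f₀ m) h.choose else 0 with hCcdef
    refine ⟨Cc, ?_⟩
    have hone : (B₀ * Cc).submatrix f g = 1 := by
      ext i j
      have hgj : ∃ k, g k = g j := ⟨j, rfl⟩
      have hcj : hgj.choose = j := hg.injective hgj.choose_spec
      have h1 : ∀ m, Cc m (g j) = W (f₀ m) j := by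
        intro m
        rw [hCcdef]
        simp only
        rw [dif_pos hgj, hcj]
      have h2 : (B₀ * Cc).submatrix f g i j = B₀.mulVec (fun m => W (f₀ m) j) (f i) := by
        simp [Matrix.mul_apply, Matrix.mulVec, dotProduct, h1]
      have h3 : Aᵀ.mulVec (fun i' => W i' j) = 0 := by
        funext j'
        have := congrFun (congrFun hW0 j') j
        simpa [Matrix.mul_apply, Matrix.mulVec, dotProduct] using this
      rw [h2, hspan _ h3]
      have := congrFun (congrFun hW1 i) j
      simpa using this
    rw [hone, Matrix.det_one]
    exact one_ne_zero
  -- polynomial genericity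
  set σ := (Fin (n - q) × Fin (n - q)) with hσdef
  set Xm : Matrix (Fin (n - q)) (Fin (n - q)) (MvPolynomial σ ℝ) :=
    fun i j => MvPolynomial.X (i, j) with hXmdef
  set Bp : Matrix (Fin n) (Fin (n - q)) (MvPolynomial σ ℝ) :=
    (B₀.map MvPolynomial.C) * Xm with hBpdef
  set ι := (Σ s : Fin (n - q + 1), (Fin s → Fin n) × (Fin s → Fin (n - q))) with hιdef
  set pd : ι → MvPolynomial σ ℝ := fun x => (Bp.submatrix x.2.1 x.2.2).det with hpddef
  set S : Finset ι := Finset.univ.filter (fun x => StrictMono x.2.1 ∧ StrictMono x.2.2)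
    with hSdef
  set P : MvPolynomial σ ℝ := ∏ x ∈ S, pd x with hPdef
  have heval : ∀ (c : σ → ℝ) (x : ι),
      MvPolynomial.eval c (pd x)
        = ((B₀ * (Matrix.of fun i j => c (i, j))).submatrix x.2.1 x.2.2).det := by
    intro c x
    rw [hpddef]
    simp only
    rw [RingHom.map_det]
    congr 1
    ext i j
    simp only [RingHom.mapMatrix_apply, Matrix.map_apply, Matrix.submatrix_apply, hBpdef]
    erw [Matrix.mul_apply (M := B₀.map MvPolynomial.C)]
    simp [hBpdef, Matrix.mul_apply, hXmdef, map_sum]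
  have hfac : ∀ x ∈ S, pd x ≠ 0 := by
    intro x hx
    rw [hSdef, Finset.mem_filter] at hx
    obtain ⟨Cc, hCc⟩ := keyminor x.1 x.2.1 x.2.2 hx.2.1 hx.2.2
    intro h0
    apply hCc
    have hev := heval (fun p => Cc p.1 p.2) x
    rw [h0, map_zero] at hev
    exact hev.symm
  have hP : P ≠ 0 := by
    rw [hPdef]
    exact Finset.prod_ne_zero_iff.mpr hfac
  have hex : ∃ c : σ → ℝ, MvPolynomial.eval c P ≠ 0 := by
    by_contra hc
    push_neg at hc
    exact hP (MvPolynomial.funext (fun c => by rw [hc c, map_zero]))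
  obtain ⟨c, hc⟩ := hex
  refine ⟨B₀ * (Matrix.of fun i j => c (i, j)), ?_, ?_⟩
  · intro s f g hf hg
    have hsle : s ≤ n - q := by
      have := Fintype.card_le_of_injective g hg.injective
      simpa using this
    set x : ι := ⟨⟨s, by omega⟩, f, g⟩ with hxdef
    have hxS : x ∈ S := by
      rw [hSdef, Finset.mem_filter]
      exact ⟨Finset.mem_univ _, hf, hg⟩
    have hdvd : pd x ∣ P := by
      rw [hPdef]
      exact Finset.dvd_prod_of_mem pd hxS
    obtain ⟨r, hr⟩ := hdvd
    have hne : MvPolynomial.eval c (pd x) ≠ 0 := by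
      intro h
      exact hc (by rw [hr, _root_.map_mul, h, zero_mul])
    rw [heval] at hne
    exact hne
  · rw [← Matrix.mul_assoc, hB₀0, Matrix.zero_mul]
end
end

section
/- Let M : H(n) → ℝ^m be an r-complete measurement. Then there exists a constant C > 0, independent of the error scale, such that for every ε > 0, every X_r ∈ S_r^n, every Hermitian E with ‖M(E)‖₂ ≤ ε, and every positive semidefinite Hermitian matrix Y with ‖M(Y) − M(X_r + E)‖₂ ≤ ε, one has ‖Y − X_r‖₂ ≤ C·ε. -/
open Matrix
open scoped ComplexOrder

noncomputable section

namespace Stmt9Aux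

variable {n : ℕ}

/-- `gram v = A Aᴴ` where the columns of `A` are the vectors `v k`. -/
def gram {ι : Type*} [Fintype ι] (v : ι → Fin n → ℂ) : Matrix (Fin n) (Fin n) ℂ :=
  Matrix.of (fun i k => v k i) * (Matrix.of (fun (i : Fin n) (k : ι) => v k i))ᴴ

lemma gram_apply {ι : Type*} [Fintype ι] (v : ι → Fin n → ℂ) (a b : Fin n) :
    gram v a b = ∑ k, v k a * star (v k b) := by
  simp [gram, mul_apply]

lemma gram_posSemidef {ι : Type*} [Fintype ι] (v : ι → Fin n → ℂ) :
    (gram v).PosSemidef :=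
  Matrix.posSemidef_self_mul_conjTranspose _

lemma gram_rank_le {ι : Type*} [Fintype ι] (v : ι → Fin n → ℂ) :
    (gram v).rank ≤ Fintype.card ι :=
  le_trans (Matrix.rank_mul_le_left _ _) (Matrix.rank_le_card_width _)

/-! ### frobNorm basics -/

lemma frobNorm_nonneg (X : Matrix (Fin n) (Fin n) ℂ) : 0 ≤ frobNorm X :=
  Real.sqrt_nonneg _

lemma frobNorm_sq (X : Matrix (Fin n) (Fin n) ℂ) :
    frobNorm X ^ 2 = ∑ i, ∑ j, Complex.normSq (X i j) := by
  rw [frobNorm, Real.sq_sqrt]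
  exact Finset.sum_nonneg fun i _ => Finset.sum_nonneg fun j _ => Complex.normSq_nonneg _

lemma frobNorm_eq_zero_iff {X : Matrix (Fin n) (Fin n) ℂ} : frobNorm X = 0 ↔ X = 0 := by
  rw [frobNorm, Real.sqrt_eq_zero (Finset.sum_nonneg fun i _ => Finset.sum_nonneg fun j _ =>
    Complex.normSq_nonneg (X i j))]
  constructor
  · intro h
    ext i j
    have h1 : ∀ i ∈ Finset.univ, (0:ℝ) ≤ ∑ j, Complex.normSq (X i j) :=
      fun i _ => Finset.sum_nonneg fun j _ => Complex.normSq_nonneg _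
    have h2 := (Finset.sum_eq_zero_iff_of_nonneg h1).1 h i (Finset.mem_univ i)
    have h3 := (Finset.sum_eq_zero_iff_of_nonneg
      (fun j _ => Complex.normSq_nonneg (X i j))).1 h2 j (Finset.mem_univ j)
    simpa using Complex.normSq_eq_zero.1 h3
  · rintro rfl; simp

lemma frobNorm_pos {X : Matrix (Fin n) (Fin n) ℂ} (h : X ≠ 0) : 0 < frobNorm X :=
  lt_of_le_of_ne (frobNorm_nonneg X) (fun h' => h (frobNorm_eq_zero_iff.1 h'.symm))

lemma frobNorm_smul (a : ℝ) (X : Matrix (Fin n) (Fin n) ℂ) :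
    frobNorm (a • X) = |a| * frobNorm X := by
  have : ∀ i j, Complex.normSq ((a • X) i j) = a ^ 2 * Complex.normSq (X i j) := by
    intro i j
    have : (a • X) i j = (a : ℂ) * X i j := by
      simp [Matrix.smul_apply, Complex.real_smul]
    rw [this, Complex.normSq_mul, Complex.normSq_ofReal, sq]
  simp only [frobNorm, this, ← Finset.mul_sum]
  rw [Real.sqrt_mul (sq_nonneg a), Real.sqrt_sq_eq_abs]

/-! ### spectral helper lemmas -/

variable {D : Matrix (Fin n) (Fin n) ℂ} (hD : D.IsHermitian)

/-- sum of squared eigenvalues equals squared Frobenius norm -/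
lemma sum_sq_eigenvalues :
    ∑ k, hD.eigenvalues k ^ 2 = frobNorm D ^ 2 := by
  set U : Matrix (Fin n) (Fin n) ℂ := (hD.eigenvectorUnitary : Matrix (Fin n) (Fin n) ℂ)
  have hU' : star U * U = 1 := Matrix.mem_unitaryGroup_iff'.mp hD.eigenvectorUnitary.2
  set Λ : Matrix (Fin n) (Fin n) ℂ := diagonal (RCLike.ofReal ∘ hD.eigenvalues)
  have hspec : D = U * Λ * star U := hD.spectral_theorem
  have key : trace (D * D) = ((∑ k, hD.eigenvalues k ^ 2 : ℝ) : ℂ) := by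
    have hmid : D * D = U * (Λ * Λ) * star U := by
      rw [hspec]
      simp only [Matrix.mul_assoc]
      rw [show star U * (U * (Λ * star U)) = Λ * star U from by
        rw [← Matrix.mul_assoc, hU', Matrix.one_mul]]
    rw [hmid, Matrix.trace_mul_cycle, ← Matrix.mul_assoc, hU', Matrix.one_mul]
    simp [Λ, Matrix.diagonal_mul_diagonal, Matrix.trace_diagonal, Function.comp, sq]
  have key2 : trace (D * D) = ((∑ i, ∑ j, Complex.normSq (D i j) : ℝ) : ℂ) := by
    have hDij : ∀ i j, D j i = starRingEnd ℂ (D i j) := by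
      intro i j
      have := congrFun (congrFun hD j) i
      simpa [Matrix.conjTranspose_apply] using this.symm
    have hdiag : ∀ i, (D * D) i i = ((∑ j, Complex.normSq (D i j) : ℝ) : ℂ) := by
      intro i
      rw [Matrix.mul_apply]
      push_cast
      refine Finset.sum_congr rfl fun j _ => ?_
      rw [hDij i j, mul_comm, Complex.normSq_eq_conj_mul_self]
    rw [Matrix.trace]
    push_cast
    exact Finset.sum_congr rfl fun i _ => by rw [Matrix.diag]; rw [hdiag i]; push_cast; rfl
  have := key.symm.trans key2
  have h3 : (∑ k, hD.eigenvalues k ^ 2 : ℝ) = ∑ i, ∑ j, Complex.normSq (D i j) :=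
    Complex.ofReal_injective this
  rw [h3, frobNorm_sq]

lemma abs_eigenvalue_le (k : Fin n) : |hD.eigenvalues k| ≤ frobNorm D := by
  have h1 : hD.eigenvalues k ^ 2 ≤ frobNorm D ^ 2 := by
    rw [← sum_sq_eigenvalues hD]
    exact Finset.single_le_sum (f := fun k => hD.eigenvalues k ^ 2)
      (fun i _ => sq_nonneg _) (Finset.mem_univ k)
  calc |hD.eigenvalues k| = Real.sqrt (hD.eigenvalues k ^ 2) := (Real.sqrt_sq_eq_abs _).symm
    _ ≤ Real.sqrt (frobNorm D ^ 2) := Real.sqrt_le_sqrt h1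
    _ = frobNorm D := Real.sqrt_sq (frobNorm_nonneg D)


lemma unitary_entry_le {U : Matrix (Fin n) (Fin n) ℂ} (hU : star U * U = 1)
    (i k : Fin n) : ‖U i k‖ ≤ 1 := by
  have h1 : ((∑ j, Complex.normSq (U j k) : ℝ) : ℂ) = 1 := by
    have := congrFun (congrFun hU k) k
    rw [Matrix.mul_apply] at this
    rw [show ((∑ j, Complex.normSq (U j k) : ℝ) : ℂ)
        = ∑ j, (star U) k j * U j k from ?_, this]
    · simp
    · push_cast
      refine Finset.sum_congr rfl fun j _ => ?_
      rw [Matrix.star_apply, Complex.normSq_eq_conj_mul_self]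
      rfl
  have h2 : (∑ j, Complex.normSq (U j k) : ℝ) = 1 := by
    exact_mod_cast h1
  have h3 : Complex.normSq (U i k) ≤ 1 := by
    rw [← h2]
    exact Finset.single_le_sum (f := fun j => Complex.normSq (U j k))
      (fun j _ => Complex.normSq_nonneg _) (Finset.mem_univ i)
  calc ‖U i k‖ = Real.sqrt (Complex.normSq (U i k)) := by
        rw [Complex.norm_def]
    _ ≤ Real.sqrt 1 := Real.sqrt_le_sqrt h3
    _ = 1 := Real.sqrt_one

lemma sqrt_term (c : ℝ) (hc : 0 ≤ c) (x y : ℂ) :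
    ((Real.sqrt c : ℝ) : ℂ) * x * star (((Real.sqrt c : ℝ) : ℂ) * y) =
      x * (c : ℂ) * star y := by
  have h2 : ((Real.sqrt c : ℝ) : ℂ) * ((Real.sqrt c : ℝ) : ℂ) = (c : ℂ) := by
    rw [← Complex.ofReal_mul, Real.mul_self_sqrt hc]
  simp only [star_mul', Complex.star_def, Complex.conj_ofReal]
  ring_nf
  linear_combination (x * (starRingEnd ℂ) y) * h2

lemma exists_gram_eq {r : ℕ} (U : Matrix (Fin n) (Fin n) ℂ) (g : Fin n → ℝ)
    (hg : ∀ k, 0 ≤ g k) (hb : ∀ k, g k ≤ 1) (hUb : ∀ i k, ‖U i k‖ ≤ 1)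
    (hcard : (Finset.univ.filter fun k => g k ≠ 0).card ≤ r) :
    ∃ v : Fin r → Fin n → ℂ, (∀ i, ‖v i‖ ≤ 1) ∧
      gram v = U * diagonal (fun k => ((g k : ℝ) : ℂ)) * star U := by
  classical
  set S := Finset.univ.filter fun k => g k ≠ 0 with hS
  have hcard' : Fintype.card {k // k ∈ S} ≤ Fintype.card (Fin r) := by
    rw [Fintype.card_coe, Fintype.card_fin]; exact hcard
  obtain ⟨e⟩ := Function.Embedding.nonempty_of_card_le hcard'
  set base : {k // k ∈ S} → (Fin n → ℂ) :=
    fun k => fun i => ((Real.sqrt (g k) : ℝ) : ℂ) * U i k with hbase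
  set v : Fin r → Fin n → ℂ := Function.extend e base (fun _ => (0 : Fin n → ℂ)) with hv
  have hve : ∀ k : {k // k ∈ S}, v (e k) = base k :=
    fun k => Function.Injective.extend_apply e.injective base _ k
  have hv0 : ∀ i : Fin r, (¬ ∃ k, e k = i) → v i = 0 :=
    fun i hi => by rw [hv, Function.extend_apply' base _ i hi]
  refine ⟨v, ?_, ?_⟩
  · intro i
    refine (pi_norm_le_iff_of_nonneg zero_le_one).2 fun a => ?_
    by_cases h : ∃ k, e k = i
    · obtain ⟨k, rfl⟩ := h
      rw [hve k]
      have h1 : ‖((Real.sqrt (g k) : ℝ) : ℂ)‖ ≤ 1 := by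
        rw [Complex.norm_real, Real.norm_eq_abs,
          abs_of_nonneg (Real.sqrt_nonneg _)]
        exact Real.sqrt_le_one.mpr (hb k)
      calc ‖base k a‖ = ‖((Real.sqrt (g k) : ℝ) : ℂ)‖ * ‖U a k‖ := norm_mul _ _
        _ ≤ 1 * 1 := mul_le_mul h1 (hUb a k) (norm_nonneg _) zero_le_one
        _ = 1 := one_mul 1
    · rw [hv0 i h]; simp
  · ext a b
    rw [gram_apply]
    set F : Fin n → ℂ := fun k =>
      (((Real.sqrt (g k) : ℝ) : ℂ) * U a k) * star (((Real.sqrt (g k) : ℝ) : ℂ) * U b k)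
      with hF
    have step1 : ∑ i, v i a * star (v i b) = ∑ k ∈ S, F k := by
      rw [← Finset.sum_coe_sort S F]
      set T := Finset.univ.image (fun k : {k // k ∈ S} => e k) with hT
      rw [show (∑ i, v i a * star (v i b)) = ∑ i ∈ T, v i a * star (v i b) from ?_]
      · rw [hT, Finset.sum_image (fun x _ y _ h => e.injective h)]
        refine Finset.sum_congr rfl fun k _ => ?_
        rw [hve k, hF]
      · refine (Finset.sum_subset (Finset.subset_univ T) fun i _ hi => ?_).symm
        have : ¬ ∃ k, e k = i := by
          intro ⟨k, hk⟩
          exact hi (Finset.mem_image.2 ⟨k, Finset.mem_univ k, hk⟩)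
        rw [hv0 i this]
        simp
    have step2 : ∑ k ∈ S, F k = ∑ k, F k := by
      refine Finset.sum_subset (Finset.subset_univ S) fun k _ hk => ?_
      have hg0 : g k = 0 := by
        by_contra h
        exact hk (Finset.mem_filter.2 ⟨Finset.mem_univ k, h⟩)
      rw [hF]
      simp [hg0]
    rw [step1, step2]
    rw [Matrix.mul_apply]
    refine Finset.sum_congr rfl fun k _ => ?_
    simp only [hF]
    rw [sqrt_term (g k) (hg k) (U a k) (U b k), Matrix.mul_diagonal,
      Matrix.star_apply]

lemma card_neg_le_rank {X Y : Matrix (Fin n) (Fin n) ℂ}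
    (hX : X.PosSemidef) (hY : Y.PosSemidef) (hD : (Y - X).IsHermitian) :
    (Finset.univ.filter fun k => hD.eigenvalues k < 0).card ≤ X.rank := by
  classical
  set D := Y - X with hDdef
  set U : Matrix (Fin n) (Fin n) ℂ := (hD.eigenvectorUnitary : Matrix (Fin n) (Fin n) ℂ)
    with hUdef
  have hU' : star U * U = 1 := Matrix.mem_unitaryGroup_iff'.mp hD.eigenvectorUnitary.2
  set Λ : Matrix (Fin n) (Fin n) ℂ := diagonal (RCLike.ofReal ∘ hD.eigenvalues) with hΛ
  have hspec : D = U * Λ * star U := hD.spectral_theorem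
  set S := Finset.univ.filter fun k => hD.eigenvalues k < 0 with hS
  have li : LinearIndependent ℂ (fun k : {k // k ∈ S} =>
      X.mulVecLin (fun i => U i (k : Fin n))) := by
    rw [Fintype.linearIndependent_iff]
    intro a ha
    set c : Fin n → ℂ := fun k => if hk : k ∈ S then a ⟨k, hk⟩ else 0 with hc
    set z : Fin n → ℂ := ∑ k : {k // k ∈ S}, a k • (fun i => U i (k : Fin n)) with hz
    have hzc : z = U *ᵥ c := by
      set F : Fin n → (Fin n → ℂ) := fun k => c k • (fun i => U i k) with hFdef
      have h1 : z = ∑ k : {k // k ∈ S}, F (k : Fin n) := by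
        refine Finset.sum_congr rfl fun k _ => ?_
        rw [hFdef]
        simp only [hc, dif_pos k.2]
      have h2 : ∑ k : {k // k ∈ S}, F (k : Fin n) = ∑ k ∈ S, F k :=
        Finset.sum_coe_sort S F
      have h3 : ∑ k ∈ S, F k = ∑ k, F k := by
        refine Finset.sum_subset (Finset.subset_univ S) fun k _ hk => ?_
        rw [hFdef]
        simp [hc, dif_neg hk]
      rw [h1, h2, h3]
      ext i
      simp only [Finset.sum_apply, Pi.smul_apply, smul_eq_mul, Matrix.mulVec, dotProduct,
        hFdef]
      exact Finset.sum_congr rfl fun k _ => mul_comm _ _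
    have hXz : X *ᵥ z = 0 := by
      have : X.mulVecLin z = 0 := by
        rw [hz, map_sum]
        rw [← ha]
        exact Finset.sum_congr rfl fun k _ => (X.mulVecLin.map_smul _ _)
      exact this
    have hq1 : (0 : ℂ) ≤ star z ⬝ᵥ (D *ᵥ z) := by
      have : D *ᵥ z = Y *ᵥ z - X *ᵥ z := Matrix.sub_mulVec Y X z
      rw [this, hXz, sub_zero]
      exact hY.dotProduct_mulVec_nonneg z
    have hq2 : star z ⬝ᵥ (D *ᵥ z) = star c ⬝ᵥ (Λ *ᵥ c) := by
      have hDU : D * U = U * Λ := by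
        rw [hspec, Matrix.mul_assoc, hU', Matrix.mul_one]
      rw [hzc, Matrix.mulVec_mulVec, hDU, ← Matrix.mulVec_mulVec,
        Matrix.star_mulVec, ← Matrix.dotProduct_mulVec,
        Matrix.mulVec_mulVec]
      rw [show Uᴴ * U = 1 from hU', Matrix.one_mulVec]
    have hq3 : star c ⬝ᵥ (Λ *ᵥ c) =
        ((∑ k, hD.eigenvalues k * Complex.normSq (c k) : ℝ) : ℂ) := by
      push_cast
      simp only [dotProduct, hΛ, Matrix.mulVec_diagonal, Pi.star_apply]
      refine Finset.sum_congr rfl fun k _ => ?_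
      rw [Complex.normSq_eq_conj_mul_self]
      have h4 : ((RCLike.ofReal ∘ hD.eigenvalues) k : ℂ) = ((hD.eigenvalues k : ℝ) : ℂ) := rfl
      rw [h4, Complex.star_def]
      ring
    have hsum : (0:ℝ) ≤ ∑ k, hD.eigenvalues k * Complex.normSq (c k) := by
      rw [hq2, hq3] at hq1
      exact Complex.zero_le_real.1 hq1
    have hterm : ∀ k ∈ Finset.univ, hD.eigenvalues k * Complex.normSq (c k) ≤ 0 := by
      intro k _
      by_cases hk : k ∈ S
      · have hneg : hD.eigenvalues k < 0 := (Finset.mem_filter.1 hk).2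
        exact mul_nonpos_of_nonpos_of_nonneg hneg.le (Complex.normSq_nonneg _)
      · simp [hc, dif_neg hk]
    have hzero := (Finset.sum_eq_zero_iff_of_nonpos hterm).1
      (le_antisymm (Finset.sum_nonpos hterm) hsum)
    intro k
    have h := hzero (k : Fin n) (Finset.mem_univ _)
    have hneg : hD.eigenvalues (k : Fin n) < 0 := (Finset.mem_filter.1 k.2).2
    have : Complex.normSq (c (k : Fin n)) = 0 := by
      rcases mul_eq_zero.1 h with h' | h'
      · exact absurd h' hneg.ne
      · exact h'
    have hck : c (k : Fin n) = 0 := Complex.normSq_eq_zero.1 this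
    rw [hc] at hck
    simpa [dif_pos k.2] using hck
  have li' : LinearIndependent ℂ (fun k : {k // k ∈ S} =>
      (⟨X.mulVecLin (fun i => U i (k : Fin n)), LinearMap.mem_range_self _ _⟩ :
        LinearMap.range X.mulVecLin)) :=
    LinearIndependent.of_comp (LinearMap.range X.mulVecLin).subtype li
  have hcard := li'.fintype_card_le_finrank
  rw [Fintype.card_coe] at hcard
  exact hcard


lemma continuous_gram {ι : Type*} [Fintype ι] :
    Continuous fun v : ι → Fin n → ℂ => gram v := by
  apply continuous_matrix
  intro a b
  simp only [gram_apply]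
  refine continuous_finset_sum _ fun k _ => ?_
  have ha' : Continuous fun v : ι → Fin n → ℂ => v k a :=
    (continuous_apply a).comp (continuous_apply k)
  have hb' : Continuous fun v : ι → Fin n → ℂ => v k b :=
    (continuous_apply b).comp (continuous_apply k)
  exact ha'.mul hb'.star

lemma continuous_frobNorm : Continuous (frobNorm (n := n)) := by
  unfold frobNorm
  refine Real.continuous_sqrt.comp ?_
  refine continuous_finset_sum _ fun i _ => continuous_finset_sum _ fun j _ => ?_
  exact Complex.continuous_normSq.comp ((continuous_apply j).comp (continuous_apply i))

lemma max_sub_max_neg (a : ℝ) : max a 0 - max (-a) 0 = a := by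
  rcases le_total a 0 with h | h
  · simp [max_eq_right h, max_eq_left (neg_nonneg.2 h)]
  · simp [max_eq_left h, max_eq_right (neg_nonpos.2 h)]

/-- The decomposition lemma: the normalization of `Y - X` can be written as a difference
of Gram matrices with bounded generating vectors. -/
lemma decomp {r : ℕ} {X Y : Matrix (Fin n) (Fin n) ℂ} (hX : X.PosSemidef) (hr : X.rank ≤ r)
    (hY : Y.PosSemidef) (hD0 : Y - X ≠ 0) :
    ∃ (w : Fin n → Fin n → ℂ) (v : Fin r → Fin n → ℂ),
      (∀ j, ‖w j‖ ≤ 1) ∧ (∀ i, ‖v i‖ ≤ 1) ∧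
      gram w - gram v = (frobNorm (Y - X))⁻¹ • (Y - X) := by
  classical
  set D := Y - X with hDdef
  have hHerm : D.IsHermitian := hY.1.sub hX.1
  set t := frobNorm D with htdef
  have ht : 0 < t := frobNorm_pos hD0
  set U : Matrix (Fin n) (Fin n) ℂ := (hHerm.eigenvectorUnitary : Matrix (Fin n) (Fin n) ℂ)
    with hUdef
  have hU' : star U * U = 1 := Matrix.mem_unitaryGroup_iff'.mp hHerm.eigenvectorUnitary.2
  set lam := hHerm.eigenvalues with hlam
  have hAbs : ∀ k, |lam k| ≤ t := fun k => abs_eigenvalue_le hHerm k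
  have hUb : ∀ i k, ‖U i k‖ ≤ 1 := fun i k => unitary_entry_le hU' i k
  set fplus : Fin n → ℝ := fun k => max (lam k) 0 / t with hfplus
  set fminus : Fin n → ℝ := fun k => max (-(lam k)) 0 / t with hfminus
  have hplus0 : ∀ k, 0 ≤ fplus k := fun k =>
    div_nonneg (le_max_right _ _) ht.le
  have hminus0 : ∀ k, 0 ≤ fminus k := fun k =>
    div_nonneg (le_max_right _ _) ht.le
  have hplus1 : ∀ k, fplus k ≤ 1 := fun k => by
    rw [hfplus, div_le_one ht]
    exact max_le ((le_abs_self _).trans (hAbs k)) ((abs_nonneg _).trans (hAbs k))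
  have hminus1 : ∀ k, fminus k ≤ 1 := fun k => by
    rw [hfminus, div_le_one ht]
    exact max_le ((neg_le_abs _).trans (hAbs k)) ((abs_nonneg _).trans (hAbs k))
  obtain ⟨w, hwb, hgw⟩ := exists_gram_eq (r := n) U fplus hplus0 hplus1 hUb
    ((Finset.card_filter_le _ _).trans (by simp))
  have hfilter : (Finset.univ.filter fun k => fminus k ≠ 0) =
      (Finset.univ.filter fun k => lam k < 0) := by
    refine Finset.filter_congr fun k _ => ?_
    simp only [hfminus]
    constructor
    · intro h
      by_contra hk
      push_neg at hk
      rw [max_eq_right (neg_nonpos.2 hk)] at h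
      simp at h
    · intro h
      rw [max_eq_left (neg_nonneg.2 h.le)]
      have : -lam k ≠ 0 := by
        simpa using h.ne
      exact div_ne_zero this ht.ne'
  obtain ⟨v, hvb, hgv⟩ := exists_gram_eq (r := r) U fminus hminus0 hminus1 hUb
    (by rw [hfilter]; exact (card_neg_le_rank hX hY hHerm).trans hr)
  refine ⟨w, v, hwb, hvb, ?_⟩
  have hfun : (fun k => ((fplus k : ℝ) : ℂ) - ((fminus k : ℝ) : ℂ)) =
      fun k => ((lam k / t : ℝ) : ℂ) := by
    funext k
    rw [← Complex.ofReal_sub]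
    refine Complex.ofReal_inj.mpr ?_
    rw [hfplus, hfminus]
    rw [div_sub_div_same, max_sub_max_neg]
  have hsub : gram w - gram v = U * diagonal (fun k => ((lam k / t : ℝ) : ℂ)) * star U := by
    rw [hgw, hgv, ← Matrix.sub_mul, ← Matrix.mul_sub, Matrix.diagonal_sub, hfun]
  have hdg : diagonal (fun k => ((lam k / t : ℝ) : ℂ)) =
      t⁻¹ • diagonal (RCLike.ofReal ∘ lam) := by
    ext i j
    rcases eq_or_ne i j with rfl | hij
    · simp only [Matrix.diagonal_apply_eq, Matrix.smul_apply, Function.comp_apply]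
      rw [show (RCLike.ofReal (lam i) : ℂ) = ((lam i : ℝ) : ℂ) from rfl,
        Complex.real_smul]
      push_cast
      ring
    · simp [Matrix.diagonal_apply_ne _ hij]
  have hspec : D = U * diagonal (RCLike.ofReal ∘ lam) * star U := hHerm.spectral_theorem
  have hsmul : U * diagonal (fun k => ((lam k / t : ℝ) : ℂ)) * star U = t⁻¹ • D := by
    rw [hspec, hdg, Matrix.mul_smul, Matrix.smul_mul]
  rw [hsub]
  rw [show (frobNorm (Y - X))⁻¹ • (Y - X) = t⁻¹ • D from rfl]
  exact hsmul

end Stmt9Aux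

open Stmt9Aux in
/-- if `M` is `r`-complete then there is `C > 0` such that for all `ε > 0`,
all `X_r ∈ S_r^n`, all Hermitian `E` with `‖M(E)‖₂ ≤ ε`, and all PSD `Y` with
`‖M(Y) − M(X_r + E)‖₂ ≤ ε`, one has `‖Y − X_r‖₂ ≤ C·ε`. -/
theorem stmt9 {n m r : ℕ}
    (M : Matrix (Fin n) (Fin n) ℂ →ₗ[ℝ] EuclideanSpace ℝ (Fin m))
    (hM : rComplete M r) :
    ∃ C > (0 : ℝ), ∀ ε > (0 : ℝ),
      ∀ Xr : Matrix (Fin n) (Fin n) ℂ, Xr.PosSemidef → Xr.rank ≤ r →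
      ∀ E : Matrix (Fin n) (Fin n) ℂ, E.IsHermitian → ‖M E‖ ≤ ε →
      ∀ Y : Matrix (Fin n) (Fin n) ℂ, Y.PosSemidef → ‖M Y - M (Xr + E)‖ ≤ ε →
        frobNorm (Y - Xr) ≤ C * ε := by
  classical
  set P := (Fin n → Fin n → ℂ) × (Fin r → Fin n → ℂ) with hP
  set Φ : P → Matrix (Fin n) (Fin n) ℂ := fun p => gram p.1 - gram p.2 with hΦ
  have hΦcont : Continuous Φ := (continuous_gram.comp continuous_fst).sub
    (continuous_gram.comp continuous_snd)
  have hMcont : Continuous M := M.continuous_of_finiteDimensional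
  set g : P → ℝ := fun p => ‖M (Φ p)‖ with hg
  have hgcont : Continuous g := (hMcont.comp hΦcont).norm
  set Cset : Set P := {p : P | (∀ j, ‖p.1 j‖ ≤ 1) ∧ (∀ i, ‖p.2 i‖ ≤ 1) ∧
      frobNorm (Φ p) = 1} with hCset
  have hclosed : IsClosed Cset := by
    have h1 : IsClosed {p : P | ∀ j, ‖p.1 j‖ ≤ 1} := by
      have : {p : P | ∀ j, ‖p.1 j‖ ≤ 1} = ⋂ j, {p : P | ‖p.1 j‖ ≤ 1} := by
        ext p; simp
      rw [this]
      exact isClosed_iInter fun j => isClosed_le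
        (((continuous_apply j).comp continuous_fst).norm) continuous_const
    have h2 : IsClosed {p : P | ∀ i, ‖p.2 i‖ ≤ 1} := by
      have : {p : P | ∀ i, ‖p.2 i‖ ≤ 1} = ⋂ i, {p : P | ‖p.2 i‖ ≤ 1} := by
        ext p; simp
      rw [this]
      exact isClosed_iInter fun i => isClosed_le
        (((continuous_apply i).comp continuous_snd).norm) continuous_const
    have h3 : IsClosed {p : P | frobNorm (Φ p) = 1} :=
      isClosed_eq (continuous_frobNorm.comp hΦcont) continuous_const
    have : Cset = {p : P | ∀ j, ‖p.1 j‖ ≤ 1} ∩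
        ({p : P | ∀ i, ‖p.2 i‖ ≤ 1} ∩ {p : P | frobNorm (Φ p) = 1}) := by
      ext p; simp [hCset, and_assoc]
    rw [this]
    exact h1.inter (h2.inter h3)
  have hsubset : Cset ⊆ Metric.closedBall 0 1 := by
    intro p hp
    rw [Metric.mem_closedBall, dist_zero_right, Prod.norm_def]
    refine max_le ?_ ?_
    · exact (pi_norm_le_iff_of_nonneg zero_le_one).2 hp.1
    · exact (pi_norm_le_iff_of_nonneg zero_le_one).2 hp.2.1
  have hcomp : IsCompact Cset :=
    IsCompact.of_isClosed_subset (isCompact_closedBall 0 1) hclosed hsubset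
  -- membership from decomposition
  have hmem : ∀ X Y : Matrix (Fin n) (Fin n) ℂ, X.PosSemidef → X.rank ≤ r →
      Y.PosSemidef → Y - X ≠ 0 →
      ∃ p ∈ Cset, Φ p = (frobNorm (Y - X))⁻¹ • (Y - X) := by
    intro X Y hX hr hY hD0
    obtain ⟨w, v, hw, hv, heq⟩ := decomp hX hr hY hD0
    refine ⟨(w, v), ⟨hw, hv, ?_⟩, heq⟩
    rw [show Φ (w, v) = gram w - gram v from rfl, heq, frobNorm_smul,
      abs_of_pos (inv_pos.2 (frobNorm_pos hD0)), inv_mul_cancel₀ (frobNorm_pos hD0).ne']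
  -- key uniform bound
  have hkey : ∃ c > (0:ℝ), ∀ X Y : Matrix (Fin n) (Fin n) ℂ, X.PosSemidef → X.rank ≤ r →
      Y.PosSemidef → c * frobNorm (Y - X) ≤ ‖M (Y - X)‖ := by
    by_cases hne : Cset.Nonempty
    · obtain ⟨p₀, hp₀, hmin⟩ := hcomp.exists_isMinOn hne hgcont.continuousOn
      have hΦne : Φ p₀ ≠ 0 := by
        intro h
        have := hp₀.2.2
        rw [h, frobNorm_eq_zero_iff.2 rfl] at this
        norm_num at this
      have hc : 0 < g p₀ := by
        rcases lt_or_eq_of_le (norm_nonneg (M (Φ p₀))) with h | h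
        · exact h
        · exfalso
          have hM0 : M (Φ p₀) = 0 := by
            rw [← norm_eq_zero]; exact h.symm
          have heqM : M (gram p₀.2) = M (gram p₀.1) := by
            have := hM0
            rw [show Φ p₀ = gram p₀.1 - gram p₀.2 from rfl, map_sub,
              sub_eq_zero] at this
            exact this.symm
          refine hM (gram p₀.2) (gram p₀.1) (gram_posSemidef _)
            ((gram_rank_le _).trans (by simp)) (gram_posSemidef _) ?_ heqM
          intro h'
          exact hΦne (by rw [hΦ]; simp only []; rw [h']; exact sub_self _)
      refine ⟨g p₀, hc, fun X Y hX hr hY => ?_⟩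
      by_cases hD0 : Y - X = 0
      · rw [hD0, frobNorm_eq_zero_iff.2 rfl, mul_zero]
        exact norm_nonneg _
      · obtain ⟨p, hpC, hpeq⟩ := hmem X Y hX hr hY hD0
        have h1 : g p₀ ≤ g p := hmin hpC
        have ht : 0 < frobNorm (Y - X) := frobNorm_pos hD0
        have h2 : g p = (frobNorm (Y - X))⁻¹ * ‖M (Y - X)‖ := by
          rw [hg]
          simp only []
          rw [hpeq, M.map_smul, norm_smul, Real.norm_eq_abs,
            abs_of_pos (inv_pos.2 ht)]
        rw [h2] at h1
        calc g p₀ * frobNorm (Y - X)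
            ≤ (frobNorm (Y - X))⁻¹ * ‖M (Y - X)‖ * frobNorm (Y - X) :=
              mul_le_mul_of_nonneg_right h1 ht.le
          _ = ‖M (Y - X)‖ := by field_simp
    · refine ⟨1, one_pos, fun X Y hX hr hY => ?_⟩
      by_cases hD0 : Y - X = 0
      · rw [hD0, frobNorm_eq_zero_iff.2 rfl, mul_zero]
        exact norm_nonneg _
      · obtain ⟨p, hpC, _⟩ := hmem X Y hX hr hY hD0
        exact absurd ⟨p, hpC⟩ hne
  obtain ⟨c, hc, hkey⟩ := hkey
  refine ⟨2 / c, by positivity, ?_⟩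
  intro ε hε Xr hXr hrank E hE hME Y hYpsd hMY
  have hnorm : ‖M (Y - Xr)‖ ≤ 2 * ε := by
    have h1 : M (Y - Xr) = (M Y - M (Xr + E)) + M E := by
      rw [map_sub, map_add]
      abel
    calc ‖M (Y - Xr)‖ = ‖(M Y - M (Xr + E)) + M E‖ := by rw [h1]
      _ ≤ ‖M Y - M (Xr + E)‖ + ‖M E‖ := norm_add_le _ _
      _ ≤ ε + ε := add_le_add hMY hME
      _ = 2 * ε := by ring
  have h2 := hkey Xr Y hXr hrank hYpsd
  have h3 : c * frobNorm (Y - Xr) ≤ 2 * ε := h2.trans hnorm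
  rw [div_mul_eq_mul_div, le_div_iff₀ hc, mul_comm]
  linarith
end
end
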